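/- Let G be a countable group acting faithfully on the right by homeomorphisms on a second countable Hausdorff topological space X, let 𝒰 be a countable base for the topology of X, and let μ be an invariant random subgroup of G. Then for μ-almost every subgroup H ≤ G the following holds: for all U, V ∈ 𝒰 with U ∩ V = ∅ such that some h ∈ H satisfies U·h = V, the subgroup K = {g ∈ R_G(U) : g⁻¹ R_H(U) g = R_H(U), and there exists h' ∈ H with U·h' = U and x·h' = x·g for all x ∈ U} has finite index in R_G(U); moreover K ∩ H is a normal subgroup of K and the quotient group K/(K ∩ H) is an FC-group, i.e. for every g ∈ K the set of cosets {(k⁻¹gk)(K ∩ H) : k ∈ K} is finite. -/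

import Mathlib

open MulOpposite MeasureTheory

/-- The σ-algebra on the space of subgroups of `G`, generated by the sets
`{H : g ∈ H}` for `g ∈ G` (the Borel σ-algebra of the Chabauty topology). -/
instance subgroupMeasurableSpace (G : Type*) [Group G] : MeasurableSpace (Subgroup G) :=
  MeasurableSpace.generateFrom {A : Set (Subgroup G) | ∃ g : G, A = {H : Subgroup G | g ∈ H}}

/-- Conjugation `H ↦ g⁻¹ H g` on subgroups. -/
def conjSubgroup {G : Type*} [Group G] (g : G) (H : Subgroup G) : Subgroup G :=
  Subgroup.map (MulAut.conj g⁻¹).toMonoidHom H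

/-- Pointwise stabilizer of a set `A ⊆ X` for a right action of `G` on `X`:
`{g ∈ G : x·g = x for all x ∈ A}`. -/
def pointwiseStabilizer (G : Type*) {X : Type*} [Group G] [MulAction Gᵐᵒᵖ X] (A : Set X) :
    Subgroup G where
  carrier := {g : G | ∀ x ∈ A, op g • x = x}
  one_mem' := by intro x _; simp
  mul_mem' := by
    intro g h hg hh x hx
    have h1 : op (g * h) • x = op h • (op g • x) := by
      rw [op_mul, mul_smul]
    rw [h1, hg x hx, hh x hx]
  inv_mem' := by
    intro g hg x hx
    have h1 : op g⁻¹ • (op g • x) = x := by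
      rw [op_inv]; exact inv_smul_smul _ _
    rw [hg x hx] at h1
    exact h1

/-- Rigid stabilizer `R_G(U) = {g ∈ G : x·g = x for all x ∈ X \ U}`. -/
def rigidStabilizer (G : Type*) {X : Type*} [Group G] [MulAction Gᵐᵒᵖ X] (U : Set X) :
    Subgroup G :=
  pointwiseStabilizer G Uᶜ

/-- The fixed-point set of a subgroup `H` in `X`: `Fix(H) = {x : x·h = x for all h ∈ H}`. -/
def fixedSet (X : Type*) {G : Type*} [Group G] [MulAction Gᵐᵒᵖ X] (H : Subgroup G) : Set X :=
  {x : X | ∀ h ∈ H, op h • x = x}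


section Pointwise

variable {G X : Type*} [Group G] [MulAction Gᵐᵒᵖ X]

lemma ract_mul (g h : G) (x : X) : op (g * h) • x = op h • (op g • x) := by
  rw [op_mul, mul_smul]

lemma ract_inv_cancel (g : G) (x : X) : op g⁻¹ • (op g • x) = x := by
  rw [op_inv]; exact inv_smul_smul _ _

lemma ract_cancel_inv (g : G) (x : X) : op g • (op g⁻¹ • x) = x := by
  rw [op_inv]; exact smul_inv_smul _ _

lemma mem_rigidStabilizer {U : Set X} {g : G} :
    g ∈ rigidStabilizer G U ↔ ∀ x : X, x ∉ U → op g • x = x := Iff.rfl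

/-- faithfulness: two elements acting identically are equal -/
lemma eq_of_act_eq (hfaith : ∀ g : G, (∀ x : X, op g • x = x) → g = 1)
    {a b : G} (h : ∀ x : X, op a • x = op b • x) : a = b := by
  have : a * b⁻¹ = 1 := by
    apply hfaith
    intro x
    rw [ract_mul]
    rw [h x]
    exact ract_inv_cancel b x
  have := congrArg (fun y => y * b) this
  simpa using this

/-- a rigid stabilizer element maps U into U -/
lemma rigid_maps_into {U : Set X} {g : G} (hg : g ∈ rigidStabilizer G U)
    {x : X} (hx : x ∈ U) : op g • x ∈ U := by
  by_contra hnot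
  have h1 : op g • (op g • x) = op g • x := hg _ hnot
  have h2 : op g⁻¹ • (op g • (op g • x)) = op g⁻¹ • (op g • x) := congrArg _ h1
  rw [ract_inv_cancel, ract_inv_cancel] at h2
  exact hnot (by rw [h2]; exact hx)

/-- a rigid stabilizer element maps U onto U -/
lemma rigid_image (U : Set X) {g : G} (hg : g ∈ rigidStabilizer G U) :
    (fun x : X => op g • x) '' U = U := by
  apply Set.Subset.antisymm
  · rintro _ ⟨x, hx, rfl⟩; exact rigid_maps_into hg hx
  · intro x hx
    refine ⟨op g⁻¹ • x, rigid_maps_into (inv_mem hg) hx, ract_cancel_inv g x⟩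

/-- if w maps U onto U then it maps the complement into the complement -/
lemma image_compl {U : Set X} {w : G} (hw : (fun x : X => op w • x) '' U = U)
    {x : X} (hx : x ∉ U) : op w • x ∉ U := by
  intro hmem
  -- x = op w⁻¹ • (op w • x), and op w • x ∈ U = image, so ∃ y ∈ U, op w • y = op w • x
  have : op w • x ∈ (fun x : X => op w • x) '' U := hw.symm ▸ hmem
  obtain ⟨y, hy, hxy⟩ := this
  have : y = x := by
    have := congrArg (fun z => op w⁻¹ • z) hxy
    simpa [ract_inv_cancel] using this
  exact hx (this ▸ hy)

lemma image_mem {U : Set X} {w : G} (hw : (fun x : X => op w • x) '' U = U)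
    {x : X} (hx : x ∈ U) : op w • x ∈ U := hw ▸ ⟨x, hx, rfl⟩

lemma image_inv_mem {U : Set X} {w : G} (hw : (fun x : X => op w • x) '' U = U)
    {x : X} (hx : x ∈ U) : op w⁻¹ • x ∈ U := by
  have : x ∈ (fun x : X => op w • x) '' U := hw.symm ▸ hx
  obtain ⟨y, hy, hxy⟩ := this
  have : op w⁻¹ • x = y := by rw [← hxy]; exact ract_inv_cancel w y
  exact this ▸ hy

lemma image_inv {U : Set X} {w : G} (hw : (fun x : X => op w • x) '' U = U) :
    (fun x : X => op w⁻¹ • x) '' U = U := by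
  apply Set.Subset.antisymm
  · rintro _ ⟨x, hx, rfl⟩; exact image_inv_mem hw hx
  · intro x hx
    exact ⟨op w • x, image_mem hw hx, ract_inv_cancel w x⟩

lemma image_inv_compl {U : Set X} {w : G} (hw : (fun x : X => op w • x) '' U = U)
    {x : X} (hx : x ∉ U) : op w⁻¹ • x ∉ U := image_compl (image_inv hw) hx

/-- inverses agree on U when the elements agree on U and both preserve U -/
lemma inv_agrees {U : Set X} {w g : G}
    (hwU : (fun x : X => op w • x) '' U = U) (hgU : (fun x : X => op g • x) '' U = U)
    (hagree : ∀ x ∈ U, op w • x = op g • x) :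
    ∀ x ∈ U, op w⁻¹ • x = op g⁻¹ • x := by
  intro x hx
  have h1 : op g⁻¹ • x ∈ U := image_inv_mem hgU hx
  have h2 : op w • (op g⁻¹ • x) = op g • (op g⁻¹ • x) := hagree _ h1
  rw [ract_cancel_inv] at h2
  have := congrArg (fun z => op w⁻¹ • z) h2
  simpa [ract_inv_cancel] using this.symm

end Pointwise

section KSub

variable {G X : Type*} [Group G] [MulAction Gᵐᵒᵖ X]

lemma mem_conjSubgroup {g a : G} {H : Subgroup G} :
    a ∈ conjSubgroup g H ↔ g * a * g⁻¹ ∈ H := by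
  constructor
  · rintro ⟨b, hb, rfl⟩
    simpa [MulAut.conj_apply, mul_assoc] using hb
  · intro hb
    refine ⟨g * a * g⁻¹, hb, ?_⟩
    simp [MulAut.conj_apply]
    group

lemma conjSubgroup_conjSubgroup (a b : G) (H : Subgroup G) :
    conjSubgroup a (conjSubgroup b H) = conjSubgroup (b * a) H := by
  ext x
  simp only [mem_conjSubgroup, mul_assoc, mul_inv_rev]

lemma conjSubgroup_one (H : Subgroup G) : conjSubgroup 1 H = H := by
  ext x; simp [mem_conjSubgroup]

lemma conjSubgroup_inv_conjSubgroup (a : G) (H : Subgroup G) :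
    conjSubgroup a⁻¹ (conjSubgroup a H) = H := by
  rw [conjSubgroup_conjSubgroup, mul_inv_cancel, conjSubgroup_one]

lemma conjSubgroup_conjSubgroup_inv (a : G) (H : Subgroup G) :
    conjSubgroup a (conjSubgroup a⁻¹ H) = H := by
  rw [conjSubgroup_conjSubgroup, inv_mul_cancel, conjSubgroup_one]

/-- image of U under product -/
lemma image_mul {U : Set X} {a b : G} (ha : (fun x : X => op a • x) '' U = U)
    (hb : (fun x : X => op b • x) '' U = U) :
    (fun x : X => op (a * b) • x) '' U = U := by
  apply Set.Subset.antisymm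
  · rintro _ ⟨x, hx, rfl⟩
    simp only [ract_mul]
    exact image_mem hb (image_mem ha hx)
  · intro x hx
    refine ⟨op a⁻¹ • (op b⁻¹ • x), image_inv_mem ha (image_inv_mem hb hx), ?_⟩
    simp only [ract_mul]
    rw [ract_cancel_inv, ract_cancel_inv]

/-- Key faithful-transport lemma: if `w` agrees with `g` on `U`, `g ∈ R_G(U)`,
`w` preserves `U`, then conjugation by `g` and by `w` agree on `R_G(U)`. -/
lemma conj_eq_conj_of_witness (hfaith : ∀ g : G, (∀ x : X, op g • x = x) → g = 1) {U : Set X} {g w : G}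
    (hg : g ∈ rigidStabilizer G U)
    (hwU : (fun x : X => op w • x) '' U = U)
    (hagree : ∀ x ∈ U, op w • x = op g • x)
    {c : G} (hc : c ∈ rigidStabilizer G U) :
    g⁻¹ * c * g = w⁻¹ * c * w := by
  apply eq_of_act_eq hfaith
  intro x
  have expand : ∀ u v : G, op (u⁻¹ * c * v) • x = op v • (op c • (op u⁻¹ • x)) := by
    intro u v
    rw [ract_mul, ract_mul]
  rw [expand g g, expand w w]
  by_cases hx : x ∈ U
  · have hgU : (fun x : X => op g • x) '' U = U := rigid_image U hg
    have hinv : op w⁻¹ • x = op g⁻¹ • x := inv_agrees hwU hgU hagree x hx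
    rw [hinv]
    have h1 : op g⁻¹ • x ∈ U := image_inv_mem hgU hx
    have h2 : op c • (op g⁻¹ • x) ∈ U := rigid_maps_into hc h1
    rw [hagree _ h2]
  · have h1 : op g⁻¹ • x = x := (inv_mem hg) x hx
    have h2 : op w⁻¹ • x ∉ U := image_inv_compl hwU hx
    have h3 : op c • (op w⁻¹ • x) = op w⁻¹ • x := hc _ h2
    have h4 : op c • x = x := hc _ hx
    rw [h1, h4, hg _ hx, h3, ract_cancel_inv]

/-- the normalization condition follows from having a witness -/
lemma conj_eq_of_witness (hfaith : ∀ g : G, (∀ x : X, op g • x = x) → g = 1) {U : Set X} {g w : G} {H : Subgroup G}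
    (hg : g ∈ rigidStabilizer G U) (hw : w ∈ H)
    (hwU : (fun x : X => op w • x) '' U = U)
    (hagree : ∀ x ∈ U, op w • x = op g • x) :
    conjSubgroup g (H ⊓ rigidStabilizer G U) = H ⊓ rigidStabilizer G U := by
  have hgU : (fun x : X => op g • x) '' U = U := rigid_image U hg
  ext b
  rw [mem_conjSubgroup]
  constructor
  · intro hb
    -- b = g⁻¹ * (g*b*g⁻¹) * g = w⁻¹ * (g*b*g⁻¹) * w
    obtain ⟨hbH, hbR⟩ := hb
    have key := conj_eq_conj_of_witness hfaith hg hwU hagree hbR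
    have hb' : b = g⁻¹ * (g * b * g⁻¹) * g := by group
    rw [key] at hb'
    constructor
    · rw [hb']
      exact Subgroup.mul_mem _ (Subgroup.mul_mem _ (Subgroup.inv_mem _ hw) hbH) hw
    · have : b = g⁻¹ * (g * b * g⁻¹) * g := by group
      rw [this]
      exact Subgroup.mul_mem _ (Subgroup.mul_mem _ (Subgroup.inv_mem _ hg) hbR) hg
  · intro hb
    -- g*b*g⁻¹ = w*b*w⁻¹ : apply the key lemma with g⁻¹, w⁻¹
    have hg' : g⁻¹ ∈ rigidStabilizer G U := inv_mem hg
    have hw'U : (fun x : X => op w⁻¹ • x) '' U = U := image_inv hwU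
    have hagree' : ∀ x ∈ U, op w⁻¹ • x = op g⁻¹ • x := inv_agrees hwU hgU hagree
    have key := conj_eq_conj_of_witness hfaith hg' hw'U hagree' hb.2
    simp only [inv_inv] at key
    constructor
    · rw [key]
      exact Subgroup.mul_mem _ (Subgroup.mul_mem _ hw hb.1) (Subgroup.inv_mem _ hw)
    · exact Subgroup.mul_mem _ (Subgroup.mul_mem _ hg hb.2) (Subgroup.inv_mem _ hg)

/-- The subgroup `K` of the statement. -/
def Ksub (hfaith : ∀ g : G, (∀ x : X, op g • x = x) → g = 1) (U : Set X) (H : Subgroup G) : Subgroup G where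
  carrier := {g : G | g ∈ rigidStabilizer G U ∧
      conjSubgroup g (H ⊓ rigidStabilizer G U) = H ⊓ rigidStabilizer G U ∧
      ∃ h' ∈ H, (fun x : X => op h' • x) '' U = U ∧
        ∀ x ∈ U, op h' • x = op g • x}
  one_mem' := by
    refine ⟨one_mem _, by rw [conjSubgroup_one], 1, Subgroup.one_mem H, ?_, ?_⟩
    · have : (fun x : X => op (1:G) • x) = id := by
        funext x; simp
      rw [this, Set.image_id]
    · intro x _; rfl
  mul_mem' := by
    rintro g1 g2 ⟨hg1, _, w1, hw1, hw1U, hag1⟩ ⟨hg2, _, w2, hw2, hw2U, hag2⟩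
    have hg12 : g1 * g2 ∈ rigidStabilizer G U := mul_mem hg1 hg2
    have hwU : (fun x : X => op (w1 * w2) • x) '' U = U := image_mul hw1U hw2U
    have hag : ∀ x ∈ U, op (w1 * w2) • x = op (g1 * g2) • x := by
      intro x hx
      rw [ract_mul, ract_mul, hag1 x hx]
      exact hag2 _ (rigid_maps_into hg1 hx)
    exact ⟨hg12, conj_eq_of_witness hfaith hg12 (Subgroup.mul_mem _ hw1 hw2) hwU hag,
      w1 * w2, Subgroup.mul_mem _ hw1 hw2, hwU, hag⟩
  inv_mem' := by
    rintro g ⟨hg, _, w, hw, hwU, hag⟩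
    have hg' : g⁻¹ ∈ rigidStabilizer G U := inv_mem hg
    have hw'U : (fun x : X => op w⁻¹ • x) '' U = U := image_inv hwU
    have hag' : ∀ x ∈ U, op w⁻¹ • x = op g⁻¹ • x :=
      inv_agrees hwU (rigid_image U hg) hag
    exact ⟨hg', conj_eq_of_witness hfaith hg' (Subgroup.inv_mem _ hw) hw'U hag',
      w⁻¹, Subgroup.inv_mem _ hw, hw'U, hag'⟩

lemma Ksub_carrier (hfaith : ∀ g : G, (∀ x : X, op g • x = x) → g = 1) (U : Set X) (H : Subgroup G) :
    (Ksub hfaith U H : Set G) = {g : G | g ∈ rigidStabilizer G U ∧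
      conjSubgroup g (H ⊓ rigidStabilizer G U) = H ⊓ rigidStabilizer G U ∧
      ∃ h' ∈ H, (fun x : X => op h' • x) '' U = U ∧
        ∀ x ∈ U, op h' • x = op g • x} := rfl

lemma mem_Ksub_iff (hfaith : ∀ g : G, (∀ x : X, op g • x = x) → g = 1) {U : Set X} {H : Subgroup G} {g : G} :
    g ∈ Ksub hfaith U H ↔ g ∈ rigidStabilizer G U ∧
      ∃ w ∈ H, (fun x : X => op w • x) '' U = U ∧ ∀ x ∈ U, op w • x = op g • x := by
  constructor
  · rintro ⟨hg, _, w, hw⟩; exact ⟨hg, w, hw⟩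
  · rintro ⟨hg, w, hw, hwU, hag⟩
    exact ⟨hg, conj_eq_of_witness hfaith hg hw hwU hag, w, hw, hwU, hag⟩

lemma Ksub_le (hfaith : ∀ g : G, (∀ x : X, op g • x = x) → g = 1) (U : Set X) (H : Subgroup G) : Ksub hfaith U H ≤ rigidStabilizer G U :=
  fun _ hg => hg.1

lemma Ksub_inf_eq (hfaith : ∀ g : G, (∀ x : X, op g • x = x) → g = 1) (U : Set X) (H : Subgroup G) :
    Ksub hfaith U H ⊓ H = H ⊓ rigidStabilizer G U := by
  ext r
  constructor
  · rintro ⟨hrK, hrH⟩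
    exact ⟨hrH, (Ksub_le hfaith U H) hrK⟩
  · rintro ⟨hrH, hrR⟩
    refine ⟨(mem_Ksub_iff hfaith).2 ⟨hrR, r, hrH, rigid_image U hrR, fun x _ => rfl⟩, hrH⟩

lemma Ksub_normal (hfaith : ∀ g : G, (∀ x : X, op g • x = x) → g = 1) (U : Set X) (H : Subgroup G) :
    ((Ksub hfaith U H ⊓ H).subgroupOf (Ksub hfaith U H)).Normal := by
  constructor
  intro n hn k
  rw [Subgroup.mem_subgroupOf] at hn ⊢
  obtain ⟨hnK, hnH⟩ := hn
  have hnR : (n : G) ∈ rigidStabilizer G U := (Ksub_le hfaith U H) hnK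
  obtain ⟨hkR, hkconj, -⟩ := k.2
  have hmem : (n : G) ∈ conjSubgroup (k : G) (H ⊓ rigidStabilizer G U) := by
    rw [hkconj]; exact ⟨hnH, hnR⟩
  rw [mem_conjSubgroup] at hmem
  exact Subgroup.mem_inf.mpr ⟨mul_mem (mul_mem k.2 hnK) (inv_mem k.2), hmem.1⟩

end KSub

section SchemeOne

variable {G X : Type*} [Group G] [MulAction Gᵐᵒᵖ X]
variable (hfaith : ∀ g : G, (∀ x : X, op g • x = x) → g = 1)

lemma ract_triple (a b c : G) (y : X) :
    op (a * b * c) • y = op c • (op b • (op a • y)) := by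
  rw [ract_mul, ract_mul]

/-- the conjugate `h⁻¹ γ⁻¹ h` fixes the complement of `V` -/
lemma conj_fixes_off_V {U V : Set X} {h γ : G}
    (hUV : (fun x : X => op h • x) '' U = V)
    (hγ : γ ∈ rigidStabilizer G U) {y : X} (hy : y ∉ V) :
    op (h⁻¹ * γ⁻¹ * h) • y = y := by
  rw [ract_triple]
  have hz : op h⁻¹ • y ∉ U := by
    intro hz
    exact hy (hUV ▸ ⟨op h⁻¹ • y, hz, ract_cancel_inv h y⟩)
  rw [(inv_mem hγ) _ hz, ract_cancel_inv]

/-- `retW γ = γ h⁻¹ γ⁻¹ h` agrees with `γ` on `U` -/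
lemma retW_agree {U V : Set X} {h γ : G}
    (hUV : (fun x : X => op h • x) '' U = V) (hdisj : U ∩ V = ∅)
    (hγ : γ ∈ rigidStabilizer G U) {x : X} (hx : x ∈ U) :
    op (γ * h⁻¹ * γ⁻¹ * h) • x = op γ • x := by
  have e1 : γ * h⁻¹ * γ⁻¹ * h = γ * (h⁻¹ * γ⁻¹ * h) := by group
  rw [e1, ract_mul]
  have hxU : op γ • x ∈ U := rigid_maps_into hγ hx
  have hxV : op γ • x ∉ V := by
    intro hmem
    have : op γ • x ∈ U ∩ V := ⟨hxU, hmem⟩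
    rw [hdisj] at this
    exact this
  exact conj_fixes_off_V hUV hγ hxV

lemma retW_image {U V : Set X} {h γ : G}
    (hUV : (fun x : X => op h • x) '' U = V) (hdisj : U ∩ V = ∅)
    (hγ : γ ∈ rigidStabilizer G U) :
    (fun x : X => op (γ * h⁻¹ * γ⁻¹ * h) • x) '' U = U := by
  rw [Set.image_congr (fun x hx => retW_agree hUV hdisj hγ hx)]
  exact rigid_image U hγ

/-- pair confinement : two "returns" have ratio in `K` -/
lemma pair_mem_Ksub {U V : Set X} {h : G} {H : Subgroup G}
    (hUV : (fun x : X => op h • x) '' U = V) (hdisj : U ∩ V = ∅)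
    {γ1 γ2 : G} (hγ1 : γ1 ∈ rigidStabilizer G U) (hγ2 : γ2 ∈ rigidStabilizer G U)
    (hr1 : γ1 * h * γ1⁻¹ ∈ H) (hr2 : γ2 * h * γ2⁻¹ ∈ H) :
    γ2 * γ1⁻¹ ∈ Ksub hfaith U H := by
  rw [mem_Ksub_iff]
  refine ⟨mul_mem hγ2 (inv_mem hγ1), (γ2 * h⁻¹ * γ2⁻¹ * h) * (γ1 * h⁻¹ * γ1⁻¹ * h)⁻¹, ?_, ?_, ?_⟩
  · have : (γ2 * h⁻¹ * γ2⁻¹ * h) * (γ1 * h⁻¹ * γ1⁻¹ * h)⁻¹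
        = (γ2 * h * γ2⁻¹)⁻¹ * (γ1 * h * γ1⁻¹) := by group
    rw [this]
    exact mul_mem (inv_mem hr2) hr1
  · exact image_mul (retW_image hUV hdisj hγ2) (image_inv (retW_image hUV hdisj hγ1))
  · intro x hx
    rw [ract_mul]
    rw [retW_agree hUV hdisj hγ2 hx]
    have hxU : op γ2 • x ∈ U := rigid_maps_into hγ2 hx
    have hinv := inv_agrees (retW_image hUV hdisj hγ1) (rigid_image U hγ1)
      (fun y hy => retW_agree hUV hdisj hγ1 hy) _ hxU
    rw [hinv, ract_mul]

/-- equivariance of `Ksub` under conjugation by rigid stabilizer elements -/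
lemma Ksub_conj_mem_mp {U : Set X} {H : Subgroup G} {δ g : G}
    (hδ : δ ∈ rigidStabilizer G U)
    (hg : g ∈ Ksub hfaith U (conjSubgroup δ H)) :
    δ * g * δ⁻¹ ∈ Ksub hfaith U H := by
  rw [mem_Ksub_iff] at hg ⊢
  obtain ⟨hgR, w, hw, hwU, hag⟩ := hg
  rw [mem_conjSubgroup] at hw
  refine ⟨mul_mem (mul_mem hδ hgR) (inv_mem hδ), δ * w * δ⁻¹, hw, ?_, ?_⟩
  · exact image_mul (image_mul (rigid_image U hδ) hwU) (rigid_image U (inv_mem hδ))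
  · intro x hx
    rw [ract_triple, ract_triple]
    rw [hag _ (rigid_maps_into hδ hx)]

lemma Ksub_conj_mem {U : Set X} {H : Subgroup G} {δ g : G}
    (hδ : δ ∈ rigidStabilizer G U) :
    g ∈ Ksub hfaith U (conjSubgroup δ H) ↔ δ * g * δ⁻¹ ∈ Ksub hfaith U H := by
  constructor
  · exact Ksub_conj_mem_mp hfaith hδ
  · intro hg
    have h2 : δ⁻¹ * (δ * g * δ⁻¹) * δ⁻¹⁻¹ ∈ Ksub hfaith U (conjSubgroup δ H) := by
      apply Ksub_conj_mem_mp hfaith (inv_mem hδ)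
      rw [conjSubgroup_inv_conjSubgroup]
      exact hg
    have : δ⁻¹ * (δ * g * δ⁻¹) * δ⁻¹⁻¹ = g := by group
    rw [this] at h2
    exact h2

/-- return set for scheme I -/
def retSet {X : Type*} [MulAction Gᵐᵒᵖ X] (U : Set X) (h : G) (H : Subgroup G) : Set G :=
  {γ : G | γ ∈ rigidStabilizer G U ∧ γ * h * γ⁻¹ ∈ H}

def M1 {X : Type*} [MulAction Gᵐᵒᵖ X]
    (hfaith : ∀ g : G, (∀ x : X, op g • x = x) → g = 1)
    (U : Set X) (h : G) (H : Subgroup G) : Set G :=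
  {x : G | ∃ γ1 ∈ retSet U h H, γ1 * x * γ1⁻¹ ∈ Ksub hfaith U H}

def psi1 {X : Type*} [MulAction Gᵐᵒᵖ X]
    (hfaith : ∀ g : G, (∀ x : X, op g • x = x) → g = 1)
    (U : Set X) (h : G) (H : Subgroup G) : Set G :=
  {x : G | ∃ γ1 ∈ retSet U h H, γ1 * x ∈ Ksub hfaith U H}

lemma M1_eq {U V : Set X} {h : G} {H : Subgroup G}
    (hUV : (fun x : X => op h • x) '' U = V) (hdisj : U ∩ V = ∅)
    {γ1 : G} (hγ1 : γ1 ∈ retSet U h H) :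
    M1 hfaith U h H = {x : G | γ1 * x * γ1⁻¹ ∈ Ksub hfaith U H} := by
  ext x
  constructor
  · rintro ⟨γ2, hγ2, hx⟩
    have hpair := pair_mem_Ksub hfaith hUV hdisj hγ1.1 hγ2.1 hγ1.2 hγ2.2
    have hpair' := pair_mem_Ksub hfaith hUV hdisj hγ2.1 hγ1.1 hγ2.2 hγ1.2
    have : γ1 * x * γ1⁻¹ = (γ1 * γ2⁻¹) * (γ2 * x * γ2⁻¹) * (γ2 * γ1⁻¹) := by group
    show γ1 * x * γ1⁻¹ ∈ Ksub hfaith U H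
    rw [this]
    exact mul_mem (mul_mem hpair' hx) hpair
  · intro hx
    exact ⟨γ1, hγ1, hx⟩

lemma psi1_eq {U V : Set X} {h : G} {H : Subgroup G}
    (hUV : (fun x : X => op h • x) '' U = V) (hdisj : U ∩ V = ∅)
    {γ1 : G} (hγ1 : γ1 ∈ retSet U h H) :
    psi1 hfaith U h H = {x : G | γ1 * x ∈ Ksub hfaith U H} := by
  ext x
  constructor
  · rintro ⟨γ2, hγ2, hx⟩
    have hpair := pair_mem_Ksub hfaith hUV hdisj hγ2.1 hγ1.1 hγ2.2 hγ1.2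
    have : γ1 * x = (γ1 * γ2⁻¹) * (γ2 * x) := by group
    show γ1 * x ∈ Ksub hfaith U H
    rw [this]
    exact mul_mem hpair hx
  · intro hx
    exact ⟨γ1, hγ1, hx⟩

lemma retSet_conj {U : Set X} {h δ : G} {H : Subgroup G}
    (hδ : δ ∈ rigidStabilizer G U) :
    retSet U h (conjSubgroup δ H) = {γ : G | δ * γ ∈ retSet U h H} := by
  ext γ
  constructor
  · rintro ⟨hγR, hγr⟩
    rw [mem_conjSubgroup] at hγr
    refine ⟨mul_mem hδ hγR, ?_⟩
    have : δ * (γ * h * γ⁻¹) * δ⁻¹ = (δ * γ) * h * (δ * γ)⁻¹ := by group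
    rw [← this]
    exact hγr
  · rintro ⟨hγR, hγr⟩
    have hγR' : γ ∈ rigidStabilizer G U := by
      have : γ = δ⁻¹ * (δ * γ) := by group
      rw [this]; exact mul_mem (inv_mem hδ) hγR
    refine ⟨hγR', ?_⟩
    rw [mem_conjSubgroup]
    have : δ * (γ * h * γ⁻¹) * δ⁻¹ = (δ * γ) * h * (δ * γ)⁻¹ := by group
    rw [this]
    exact hγr

lemma M1_conj {U : Set X} {h δ : G} {H : Subgroup G}
    (hδ : δ ∈ rigidStabilizer G U) :
    M1 hfaith U h (conjSubgroup δ H) = M1 hfaith U h H := by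
  ext x
  constructor
  · rintro ⟨γ, hγ, hx⟩
    rw [retSet_conj hδ] at hγ
    refine ⟨δ * γ, hγ, ?_⟩
    have hx' := (Ksub_conj_mem hfaith hδ).1 hx
    have : δ * (γ * x * γ⁻¹) * δ⁻¹ = (δ * γ) * x * (δ * γ)⁻¹ := by group
    rw [← this]
    exact hx'
  · rintro ⟨γ, hγ, hx⟩
    refine ⟨δ⁻¹ * γ, ?_, ?_⟩
    · rw [retSet_conj hδ]
      simpa using hγ
    · rw [Ksub_conj_mem hfaith hδ]
      have : δ * (δ⁻¹ * γ * x * (δ⁻¹ * γ)⁻¹) * δ⁻¹ = γ * x * γ⁻¹ := by group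
      rw [this]
      exact hx

lemma psi1_conj {U : Set X} {h δ : G} {H : Subgroup G}
    (hδ : δ ∈ rigidStabilizer G U) :
    psi1 hfaith U h (conjSubgroup δ H) = {x : G | x * δ⁻¹ ∈ psi1 hfaith U h H} := by
  ext x
  constructor
  · rintro ⟨γ, hγ, hx⟩
    rw [retSet_conj hδ] at hγ
    refine ⟨δ * γ, hγ, ?_⟩
    have hx' := (Ksub_conj_mem hfaith hδ).1 hx
    have : δ * (γ * x) * δ⁻¹ = (δ * γ) * (x * δ⁻¹) := by group
    rw [← this]
    exact hx'
  · rintro ⟨γ, hγ, hx⟩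
    refine ⟨δ⁻¹ * γ, ?_, ?_⟩
    · rw [retSet_conj hδ]
      simpa using hγ
    · rw [Ksub_conj_mem hfaith hδ]
      have : δ * (δ⁻¹ * γ * x) * δ⁻¹ = γ * (x * δ⁻¹) := by group
      rw [this]
      exact hx

end SchemeOne

section SchemeTwo

variable {G X : Type*} [Group G] [MulAction Gᵐᵒᵖ X]

def nrmSet (U : Set X) (H : Subgroup G) : Set G :=
  {γ : G | γ ∈ rigidStabilizer G U ∧
    conjSubgroup γ (H ⊓ rigidStabilizer G U) = H ⊓ rigidStabilizer G U}

def S0 (U : Set X) (w₀ : G) (H : Subgroup G) : Set G :=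
  {γ : G | γ ∈ nrmSet U H ∧ γ * w₀ * γ⁻¹ ∈ H}

def M2 (U : Set X) (w₀ : G) (H : Subgroup G) : Set G :=
  {k : G | k ∈ nrmSet U H ∧ w₀⁻¹ * k⁻¹ * w₀ * k ∈ H}

def psi2 (U : Set X) (w₀ : G) (H : Subgroup G) : Set G :=
  {x : G | x⁻¹ ∈ S0 U w₀ H}

lemma nrm_one {U : Set X} {H : Subgroup G} : (1 : G) ∈ nrmSet U H :=
  ⟨one_mem _, conjSubgroup_one _⟩

lemma nrm_mul {U : Set X} {H : Subgroup G} {a b : G}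
    (ha : a ∈ nrmSet U H) (hb : b ∈ nrmSet U H) : a * b ∈ nrmSet U H := by
  refine ⟨mul_mem ha.1 hb.1, ?_⟩
  rw [← conjSubgroup_conjSubgroup, ha.2, hb.2]

lemma nrm_inv {U : Set X} {H : Subgroup G} {a : G}
    (ha : a ∈ nrmSet U H) : a⁻¹ ∈ nrmSet U H := by
  refine ⟨inv_mem ha.1, ?_⟩
  conv_lhs => rw [← ha.2]
  rw [conjSubgroup_conjSubgroup, mul_inv_cancel, conjSubgroup_one]

lemma normpair_fwd {U : Set X} {H : Subgroup G} {γ c : G}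
    (hγ : γ ∈ nrmSet U H) (hc : c ∈ H ⊓ rigidStabilizer G U) :
    γ * c * γ⁻¹ ∈ H ⊓ rigidStabilizer G U := by
  rw [← mem_conjSubgroup, hγ.2]
  exact hc

lemma normpair_bwd {U : Set X} {H : Subgroup G} {γ c : G}
    (hγ : γ ∈ nrmSet U H) (hc : c ∈ H ⊓ rigidStabilizer G U) :
    γ⁻¹ * c * γ ∈ H ⊓ rigidStabilizer G U := by
  have : γ⁻¹ * c * γ ∈ conjSubgroup γ (H ⊓ rigidStabilizer G U) := by
    rw [mem_conjSubgroup]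
    have : γ * (γ⁻¹ * c * γ) * γ⁻¹ = c := by group
    rw [this]
    exact hc
  rw [hγ.2] at this
  exact this

lemma ract_quad (a b c d : G) (x : X) :
    op (a * b * c * d) • x = op d • (op c • (op b • (op a • x))) := by
  rw [ract_mul, ract_mul, ract_mul]

lemma comm_mem_R {U : Set X} {w₀ k : G}
    (hw₀U : (fun x : X => op w₀ • x) '' U = U) (hk : k ∈ rigidStabilizer G U) :
    w₀⁻¹ * k⁻¹ * w₀ * k ∈ rigidStabilizer G U := by
  intro x hx
  rw [ract_quad]
  have hz : op w₀⁻¹ • x ∉ U := image_inv_compl hw₀U hx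
  rw [(inv_mem hk) _ hz, ract_cancel_inv, hk _ hx]

lemma M2_one {U : Set X} {w₀ : G} {H : Subgroup G} : (1 : G) ∈ M2 U w₀ H := by
  refine ⟨nrm_one, ?_⟩
  have : w₀⁻¹ * (1:G)⁻¹ * w₀ * 1 = 1 := by group
  rw [this]; exact one_mem _

lemma M2_inv {U : Set X} {w₀ : G} {H : Subgroup G}
    (hw₀U : (fun x : X => op w₀ • x) '' U = U) {k : G} (hk : k ∈ M2 U w₀ H) :
    k⁻¹ ∈ M2 U w₀ H := by
  refine ⟨nrm_inv hk.1, ?_⟩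
  have e : w₀⁻¹ * k⁻¹⁻¹ * w₀ * k⁻¹ = k * (w₀⁻¹ * k⁻¹ * w₀ * k)⁻¹ * k⁻¹ := by group
  rw [e]
  have hc : (w₀⁻¹ * k⁻¹ * w₀ * k)⁻¹ ∈ H ⊓ rigidStabilizer G U :=
    inv_mem (Subgroup.mem_inf.mpr ⟨hk.2, comm_mem_R hw₀U hk.1.1⟩)
  exact (normpair_fwd hk.1 hc).1

lemma M2_mul {U : Set X} {w₀ : G} {H : Subgroup G}
    (hw₀U : (fun x : X => op w₀ • x) '' U = U) {k1 k2 : G}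
    (hk1 : k1 ∈ M2 U w₀ H) (hk2 : k2 ∈ M2 U w₀ H) :
    k1 * k2 ∈ M2 U w₀ H := by
  refine ⟨nrm_mul hk1.1 hk2.1, ?_⟩
  have e : w₀⁻¹ * (k1 * k2)⁻¹ * w₀ * (k1 * k2)
      = (w₀⁻¹ * k2⁻¹ * w₀ * k2) * (k2⁻¹ * (w₀⁻¹ * k1⁻¹ * w₀ * k1) * k2) := by group
  rw [e]
  have hc : w₀⁻¹ * k1⁻¹ * w₀ * k1 ∈ H ⊓ rigidStabilizer G U :=
    Subgroup.mem_inf.mpr ⟨hk1.2, comm_mem_R hw₀U hk1.1.1⟩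
  exact mul_mem hk2.2 (normpair_bwd hk2.1 hc).1

lemma c_mem_R {U : Set X} {w₀ : G}
    (hw₀U : (fun x : X => op w₀ • x) '' U = U) {γ1 γ2 : G}
    (hγ1 : γ1 ∈ rigidStabilizer G U) (hγ2 : γ2 ∈ rigidStabilizer G U) :
    (γ1 * w₀ * γ1⁻¹)⁻¹ * (γ2 * w₀ * γ2⁻¹) ∈ rigidStabilizer G U := by
  intro x hx
  have e : (γ1 * w₀ * γ1⁻¹)⁻¹ * (γ2 * w₀ * γ2⁻¹)
      = γ1 * w₀⁻¹ * γ1⁻¹ * γ2 * w₀ * γ2⁻¹ := by group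
  rw [e]
  have e2 : ∀ y : X, op (γ1 * w₀⁻¹ * γ1⁻¹ * γ2 * w₀ * γ2⁻¹) • y
      = op γ2⁻¹ • (op w₀ • (op γ2 • (op γ1⁻¹ • (op w₀⁻¹ • (op γ1 • y))))) := by
    intro y
    rw [ract_mul, ract_mul, ract_mul, ract_mul, ract_mul]
  rw [e2]
  rw [hγ1 _ hx]
  have hz : op w₀⁻¹ • x ∉ U := image_inv_compl hw₀U hx
  rw [(inv_mem hγ1) _ hz, hγ2 _ hz, ract_cancel_inv, (inv_mem hγ2) _ hx]

lemma S0_ratio {U : Set X} {w₀ : G} {H : Subgroup G}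
    (hw₀U : (fun x : X => op w₀ • x) '' U = U) {γ1 γ2 : G}
    (hγ1 : γ1 ∈ S0 U w₀ H) (hγ2 : γ2 ∈ S0 U w₀ H) :
    γ1⁻¹ * γ2 ∈ M2 U w₀ H := by
  have hnrm : γ1⁻¹ * γ2 ∈ nrmSet U H := nrm_mul (nrm_inv hγ1.1) hγ2.1
  have hc : (γ1 * w₀ * γ1⁻¹)⁻¹ * (γ2 * w₀ * γ2⁻¹) ∈ H ⊓ rigidStabilizer G U :=
    Subgroup.mem_inf.mpr ⟨mul_mem (inv_mem hγ1.2) hγ2.2,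
      c_mem_R hw₀U hγ1.1.1 hγ2.1.1⟩
  have hd := (normpair_bwd hγ1.1 hc).1
  have e : γ1⁻¹ * ((γ1 * w₀ * γ1⁻¹)⁻¹ * (γ2 * w₀ * γ2⁻¹)) * γ1
      = w₀⁻¹ * ((γ1⁻¹ * γ2)⁻¹)⁻¹ * w₀ * (γ1⁻¹ * γ2)⁻¹ := by group
  rw [e] at hd
  have : (γ1⁻¹ * γ2)⁻¹ ∈ M2 U w₀ H := ⟨nrm_inv hnrm, hd⟩
  have := M2_inv hw₀U this
  simpa using this

lemma S0_absorb {U : Set X} {w₀ : G} {H : Subgroup G}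
    (hw₀U : (fun x : X => op w₀ • x) '' U = U) {γ1 k : G}
    (hγ1 : γ1 ∈ S0 U w₀ H) (hk : k ∈ M2 U w₀ H) :
    γ1 * k ∈ S0 U w₀ H := by
  refine ⟨nrm_mul hγ1.1 hk.1, ?_⟩
  have hk' := M2_inv hw₀U hk
  have he0 : w₀⁻¹ * k⁻¹⁻¹ * w₀ * k⁻¹ ∈ H ⊓ rigidStabilizer G U :=
    Subgroup.mem_inf.mpr ⟨hk'.2, comm_mem_R hw₀U (inv_mem hk.1.1)⟩
  have e : (γ1 * k) * w₀ * (γ1 * k)⁻¹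
      = (γ1 * w₀ * γ1⁻¹) * (γ1 * (w₀⁻¹ * k⁻¹⁻¹ * w₀ * k⁻¹) * γ1⁻¹) := by group
  rw [e]
  exact mul_mem hγ1.2 (normpair_fwd hγ1.1 he0).1

lemma S0_eq_coset {U : Set X} {w₀ : G} {H : Subgroup G}
    (hw₀U : (fun x : X => op w₀ • x) '' U = U) {γ1 : G} (hγ1 : γ1 ∈ S0 U w₀ H) :
    S0 U w₀ H = {y : G | γ1⁻¹ * y ∈ M2 U w₀ H} := by
  ext y
  constructor
  · intro hy
    exact S0_ratio hw₀U hγ1 hy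
  · intro hy
    have := S0_absorb hw₀U hγ1 hy
    simpa using this

lemma inf_conj {U : Set X} {δ : G} (hδ : δ ∈ rigidStabilizer G U) (H : Subgroup G) :
    conjSubgroup δ H ⊓ rigidStabilizer G U = conjSubgroup δ (H ⊓ rigidStabilizer G U) := by
  ext a
  rw [Subgroup.mem_inf, mem_conjSubgroup, mem_conjSubgroup, Subgroup.mem_inf]
  constructor
  · rintro ⟨h1, h2⟩
    exact ⟨h1, mul_mem (mul_mem hδ h2) (inv_mem hδ)⟩
  · rintro ⟨h1, h2⟩
    refine ⟨h1, ?_⟩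
    have : a = δ⁻¹ * (δ * a * δ⁻¹) * δ := by group
    rw [this]
    exact mul_mem (mul_mem (inv_mem hδ) h2) hδ

lemma nrm_conj {U : Set X} {δ : G} {H : Subgroup G} (hδ : δ ∈ nrmSet U H) :
    nrmSet U (conjSubgroup δ H) = nrmSet U H := by
  have key : conjSubgroup δ H ⊓ rigidStabilizer G U = H ⊓ rigidStabilizer G U := by
    rw [inf_conj hδ.1, hδ.2]
  unfold nrmSet
  rw [key]

lemma mem_H_conj_iff {U : Set X} {δ : G} {H : Subgroup G} (hδ : δ ∈ nrmSet U H)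
    {c : G} (hc : c ∈ rigidStabilizer G U) :
    c ∈ conjSubgroup δ H ↔ c ∈ H := by
  rw [mem_conjSubgroup]
  constructor
  · intro h1
    have h2 : δ * c * δ⁻¹ ∈ H ⊓ rigidStabilizer G U :=
      Subgroup.mem_inf.mpr ⟨h1, mul_mem (mul_mem hδ.1 hc) (inv_mem hδ.1)⟩
    have h3 := (normpair_bwd hδ h2).1
    have e : δ⁻¹ * (δ * c * δ⁻¹) * δ = c := by group
    rw [e] at h3
    exact h3
  · intro h1
    exact (normpair_fwd hδ (Subgroup.mem_inf.mpr ⟨h1, hc⟩)).1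

lemma S0_conj {U : Set X} {w₀ δ : G} {H : Subgroup G} (hδ : δ ∈ nrmSet U H) :
    S0 U w₀ (conjSubgroup δ H) = {γ : G | δ * γ ∈ S0 U w₀ H} := by
  ext γ
  unfold S0
  rw [Set.mem_setOf_eq, Set.mem_setOf_eq, Set.mem_setOf_eq, nrm_conj hδ]
  constructor
  · rintro ⟨h1, h2⟩
    rw [mem_conjSubgroup] at h2
    refine ⟨nrm_mul hδ h1, ?_⟩
    have e : δ * (γ * w₀ * γ⁻¹) * δ⁻¹ = (δ * γ) * w₀ * (δ * γ)⁻¹ := by group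
    rw [← e]
    exact h2
  · rintro ⟨h1, h2⟩
    have h1' : γ ∈ nrmSet U H := by
      have : γ = δ⁻¹ * (δ * γ) := by group
      rw [this]
      exact nrm_mul (nrm_inv hδ) h1
    refine ⟨h1', ?_⟩
    rw [mem_conjSubgroup]
    have e : δ * (γ * w₀ * γ⁻¹) * δ⁻¹ = (δ * γ) * w₀ * (δ * γ)⁻¹ := by group
    rw [e]
    exact h2

lemma M2_conj {U : Set X} {w₀ δ : G} {H : Subgroup G}
    (hw₀U : (fun x : X => op w₀ • x) '' U = U) (hδ : δ ∈ nrmSet U H) :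
    M2 U w₀ (conjSubgroup δ H) = M2 U w₀ H := by
  ext k
  unfold M2
  rw [Set.mem_setOf_eq, Set.mem_setOf_eq, nrm_conj hδ]
  constructor
  · rintro ⟨h1, h2⟩
    exact ⟨h1, (mem_H_conj_iff hδ (comm_mem_R hw₀U h1.1)).1 h2⟩
  · rintro ⟨h1, h2⟩
    exact ⟨h1, (mem_H_conj_iff hδ (comm_mem_R hw₀U h1.1)).2 h2⟩

lemma psi2_coset {U : Set X} {w₀ : G} {H : Subgroup G}
    (hw₀U : (fun x : X => op w₀ • x) '' U = U) {γ1 : G} (hγ1 : γ1 ∈ S0 U w₀ H) :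
    psi2 U w₀ H = {x : G | x * (γ1⁻¹)⁻¹ ∈ M2 U w₀ H} := by
  ext x
  unfold psi2
  rw [Set.mem_setOf_eq, Set.mem_setOf_eq, S0_eq_coset hw₀U hγ1, Set.mem_setOf_eq]
  constructor
  · intro h1
    have h2 := M2_inv hw₀U h1
    simpa [mul_inv_rev] using h2
  · intro h1
    have h2 := M2_inv hw₀U h1
    simpa [mul_inv_rev] using h2

lemma psi2_conj {U : Set X} {w₀ δ : G} {H : Subgroup G} (hδ : δ ∈ nrmSet U H) :
    psi2 U w₀ (conjSubgroup δ H) = {x : G | x * δ⁻¹ ∈ psi2 U w₀ H} := by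
  ext x
  unfold psi2
  rw [Set.mem_setOf_eq, Set.mem_setOf_eq, Set.mem_setOf_eq, S0_conj hδ, Set.mem_setOf_eq]
  constructor
  · intro h1
    have : (x * δ⁻¹)⁻¹ = δ * x⁻¹ := by group
    rw [this]
    exact h1
  · intro h1
    have : (x * δ⁻¹)⁻¹ = δ * x⁻¹ := by group
    rw [this] at h1
    exact h1

/-- commutator transport : `[g,k] = [w₀,k]` when `w₀` is a witness of `g` -/
lemma comm_transport (hfaith : ∀ g : G, (∀ x : X, op g • x = x) → g = 1)
    {U : Set X} {g w₀ k : G}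
    (hg : g ∈ rigidStabilizer G U) (hk : k ∈ rigidStabilizer G U)
    (hw₀U : (fun x : X => op w₀ • x) '' U = U)
    (hag : ∀ x ∈ U, op w₀ • x = op g • x) :
    g⁻¹ * k⁻¹ * g * k = w₀⁻¹ * k⁻¹ * w₀ * k := by
  apply eq_of_act_eq hfaith
  intro x
  rw [ract_quad, ract_quad]
  by_cases hx : x ∈ U
  · have hgU : (fun x : X => op g • x) '' U = U := rigid_image U hg
    have h1 : op w₀⁻¹ • x = op g⁻¹ • x := inv_agrees hw₀U hgU hag x hx
    rw [h1]
    have h2 : op g⁻¹ • x ∈ U := image_inv_mem hgU hx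
    have h3 : op k⁻¹ • (op g⁻¹ • x) ∈ U := rigid_maps_into (inv_mem hk) h2
    rw [hag _ h3]
  · have h1 : op g⁻¹ • x = x := (inv_mem hg) _ hx
    have h2 : op w₀⁻¹ • x ∉ U := image_inv_compl hw₀U hx
    rw [h1, (inv_mem hk) _ hx, hg _ hx, (inv_mem hk) _ h2, ract_cancel_inv]

/-- translating a subgroup-carrier by an element of it -/
lemma coset_absorb {S : Subgroup G} {t r : G} (hr : r ∈ S) :
    (fun y : G => (t * r) * y) '' (S : Set G) = (fun y : G => t * y) '' (S : Set G) := by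
  apply Set.Subset.antisymm
  · rintro _ ⟨y, hy, rfl⟩
    exact ⟨r * y, mul_mem hr hy, by group⟩
  · rintro _ ⟨y, hy, rfl⟩
    exact ⟨r⁻¹ * y, mul_mem (inv_mem hr) hy, by group⟩

end SchemeTwo

section Rank

open scoped Classical

variable {G : Type*} [Group G]

/-- bundled data for the rank argument -/
structure RankData (G : Type*) [Group G] [Countable G] where
  μ : Measure (Subgroup G)
  Z : Subgroup G → Set G
  M : Subgroup G → Set G
  ψ : Subgroup G → Set G
  B : Set (Subgroup G)
  e : ℕ → G
  hsurj : Function.Surjective e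
  hinv : ∀ g : G, ∀ S : Set (Subgroup G), MeasurableSet S →
    μ ((fun H => conjSubgroup g H) ⁻¹' S) = μ S
  hBmeas : MeasurableSet B
  hZmeas : ∀ g : G, MeasurableSet {H | g ∈ Z H}
  hMmeas : ∀ g : G, MeasurableSet {H | g ∈ M H}
  hψmeas : ∀ g : G, MeasurableSet {H | g ∈ ψ H}
  hMZ : ∀ H ∈ B, M H ⊆ Z H
  hZmul : ∀ H ∈ B, ∀ a ∈ Z H, ∀ b ∈ Z H, a * b ∈ Z H
  hZinv : ∀ H ∈ B, ∀ a ∈ Z H, a⁻¹ ∈ Z H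
  hM1 : ∀ H ∈ B, (1:G) ∈ M H
  hMmul : ∀ H ∈ B, ∀ a ∈ M H, ∀ b ∈ M H, a * b ∈ M H
  hMinv : ∀ H ∈ B, ∀ a ∈ M H, a⁻¹ ∈ M H
  hψZ : ∀ H ∈ B, ψ H ⊆ Z H
  hψco : ∀ H ∈ B, ∃ γ ∈ Z H, ψ H = {x | x * γ⁻¹ ∈ M H}
  hstep : ∀ H ∈ B, ∀ δ ∈ Z H, conjSubgroup δ H ∈ B ∧ Z (conjSubgroup δ H) = Z H ∧
    M (conjSubgroup δ H) = M H ∧ ψ (conjSubgroup δ H) = {x | x * δ⁻¹ ∈ ψ H}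
  hinf : ∀ H ∈ B, ∀ F : Finset G, ∃ γ ∈ Z H, ∀ f ∈ F, γ * f⁻¹ ∉ M H

variable [Countable G] (D : RankData G)

namespace RankData

def MR (i : ℕ) (H : Subgroup G) : Prop :=
  D.e i ∈ D.Z H ∧ ∀ j < i, D.e j * (D.e i)⁻¹ ∉ D.M H

def Pn (n : ℕ) (H : Subgroup G) : Prop :=
  D.e n ∈ D.ψ H ∧ ∀ j < n, D.e j ∉ D.ψ H

def Pat (n : ℕ) (s : Finset ℕ) (H : Subgroup G) : Prop :=
  s ⊆ Finset.range n ∧ (∀ i ∈ s, D.MR i H) ∧ ∀ i < n, i ∉ s → ¬ D.MR i H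

def Nx (n m : ℕ) (H : Subgroup G) : Prop :=
  n < m ∧ D.MR m H ∧ ∀ j, n < j → j < m → ¬ D.MR j H

def piece (n : ℕ) (s : Finset ℕ) (m : ℕ) : Set (Subgroup G) :=
  D.B ∩ {H | D.Pn n H ∧ D.Pat n s H ∧ D.Nx n m H}

def Bk (k : ℕ) : Set (Subgroup G) :=
  D.B ∩ {H | ∃ n s, s.card = k ∧ D.Pn n H ∧ D.Pat n s H}

/-! measurability -/

lemma mr_meas (i : ℕ) : MeasurableSet {H : Subgroup G | D.MR i H} := by
  have : {H : Subgroup G | D.MR i H}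
      = {H | D.e i ∈ D.Z H} ∩ ⋂ j ∈ Finset.range i, {H | D.e j * (D.e i)⁻¹ ∈ D.M H}ᶜ := by
    ext H
    simp [MR, Set.mem_iInter]
  rw [this]
  exact (D.hZmeas _).inter (MeasurableSet.biInter (Finset.range i).countable_toSet
    (fun j _ => (D.hMmeas _).compl))

lemma pn_meas (n : ℕ) : MeasurableSet {H : Subgroup G | D.Pn n H} := by
  have : {H : Subgroup G | D.Pn n H}
      = {H | D.e n ∈ D.ψ H} ∩ ⋂ j ∈ Finset.range n, {H | D.e j ∈ D.ψ H}ᶜ := by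
    ext H
    simp [Pn, Set.mem_iInter]
  rw [this]
  exact (D.hψmeas _).inter (MeasurableSet.biInter (Finset.range n).countable_toSet
    (fun j _ => (D.hψmeas _).compl))

lemma pat_meas (n : ℕ) (s : Finset ℕ) : MeasurableSet {H : Subgroup G | D.Pat n s H} := by
  by_cases hs : s ⊆ Finset.range n
  · have : {H : Subgroup G | D.Pat n s H}
        = (⋂ i ∈ s, {H | D.MR i H}) ∩
          ⋂ i ∈ (Finset.range n).filter (fun i => i ∉ s), {H | D.MR i H}ᶜ := by
      ext H
      simp only [Pat, Set.mem_inter_iff, Set.mem_iInter, Set.mem_setOf_eq, Set.mem_compl_iff,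
        Finset.mem_filter, Finset.mem_range]
      constructor
      · rintro ⟨-, h1, h2⟩
        exact ⟨fun i hi => h1 i hi, fun i hi => h2 i hi.1 hi.2⟩
      · rintro ⟨h1, h2⟩
        exact ⟨hs, fun i hi => h1 i hi, fun i hilt hinot => h2 i ⟨hilt, hinot⟩⟩
    rw [this]
    exact ((MeasurableSet.biInter s.countable_toSet (fun i _ => D.mr_meas i)).inter
      (MeasurableSet.biInter (Finset.countable_toSet _) (fun i _ => (D.mr_meas i).compl)))
  · have : {H : Subgroup G | D.Pat n s H} = ∅ := by
      ext H
      simp only [Set.mem_setOf_eq, Set.mem_empty_iff_false, iff_false]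
      intro h
      exact hs h.1
    rw [this]
    exact MeasurableSet.empty

lemma nx_meas (n m : ℕ) : MeasurableSet {H : Subgroup G | D.Nx n m H} := by
  by_cases hnm : n < m
  · have : {H : Subgroup G | D.Nx n m H}
        = {H | D.MR m H} ∩ ⋂ j ∈ (Finset.range m).filter (fun j => n < j), {H | D.MR j H}ᶜ := by
      ext H
      simp only [Nx, Set.mem_inter_iff, Set.mem_setOf_eq, Set.mem_iInter, Set.mem_compl_iff,
        Finset.mem_filter, Finset.mem_range]
      constructor
      · rintro ⟨-, h1, h2⟩
        exact ⟨h1, fun j hj => h2 j hj.2 hj.1⟩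
      · rintro ⟨h1, h2⟩
        exact ⟨hnm, h1, fun j hj1 hj2 => h2 j ⟨hj2, hj1⟩⟩
    rw [this]
    exact (D.mr_meas m).inter (MeasurableSet.biInter (Finset.countable_toSet _)
      (fun j _ => (D.mr_meas j).compl))
  · have : {H : Subgroup G | D.Nx n m H} = ∅ := by
      ext H
      simp only [Set.mem_setOf_eq, Set.mem_empty_iff_false, iff_false]
      intro h
      exact hnm h.1
    rw [this]
    exact MeasurableSet.empty

lemma piece_meas (n : ℕ) (s : Finset ℕ) (m : ℕ) : MeasurableSet (D.piece n s m) := by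
  have : D.piece n s m = D.B ∩ ({H | D.Pn n H} ∩ ({H | D.Pat n s H} ∩ {H | D.Nx n m H})) := by
    ext H
    constructor
    · rintro ⟨hB, h1, h2, h3⟩; exact ⟨hB, h1, h2, h3⟩
    · rintro ⟨hB, h1, h2, h3⟩; exact ⟨hB, h1, h2, h3⟩
  rw [this]
  exact D.hBmeas.inter ((D.pn_meas n).inter ((D.pat_meas n s).inter (D.nx_meas n m)))

lemma Bk_meas (k : ℕ) : MeasurableSet (D.Bk k) := by
  have : D.Bk k = D.B ∩ ⋃ (p : ℕ × Finset ℕ) (_ : p.2.card = k),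
      ({H | D.Pn p.1 H} ∩ {H | D.Pat p.1 p.2 H}) := by
    ext H
    simp only [Bk, Set.mem_inter_iff, Set.mem_setOf_eq, Set.mem_iUnion]
    constructor
    · rintro ⟨hB, n, s, hcard, h1, h2⟩
      exact ⟨hB, ⟨n, s⟩, hcard, h1, h2⟩
    · rintro ⟨hB, ⟨n, s⟩, hcard, h1, h2⟩
      exact ⟨hB, n, s, hcard, h1, h2⟩
  rw [this]
  exact D.hBmeas.inter (MeasurableSet.iUnion (fun p => MeasurableSet.iUnion
    (fun _ => (D.pn_meas p.1).inter (D.pat_meas p.1 p.2))))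


/-! combinatorial core -/

lemma co_rebase {H : Subgroup G} (hB : H ∈ D.B) {y : G} (hy : y ∈ D.ψ H) :
    D.ψ H = {x : G | x * y⁻¹ ∈ D.M H} := by
  obtain ⟨γ, hγZ, hform⟩ := D.hψco H hB
  have hyγ : y * γ⁻¹ ∈ D.M H := by
    rw [hform] at hy
    exact hy
  rw [hform]
  ext x
  simp only [Set.mem_setOf_eq]
  constructor
  · intro hx
    have : x * y⁻¹ = (x * γ⁻¹) * (y * γ⁻¹)⁻¹ := by group
    rw [this]
    exact D.hMmul H hB _ hx _ (D.hMinv H hB _ hyγ)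
  · intro hx
    have : x * γ⁻¹ = (x * y⁻¹) * (y * γ⁻¹) := by group
    rw [this]
    exact D.hMmul H hB _ hx _ hyγ

lemma psi_self {H : Subgroup G} (hB : H ∈ D.B) {y : G} (hy : y ∈ D.ψ H) :
    ∀ x : G, x ∈ D.ψ H ↔ x * y⁻¹ ∈ D.M H := by
  intro x
  rw [co_rebase D hB hy]
  exact Iff.rfl

lemma exists_Pn {H : Subgroup G} (hB : H ∈ D.B) : ∃ n, D.Pn n H := by
  obtain ⟨γ, hγZ, hform⟩ := D.hψco H hB
  have hγψ : γ ∈ D.ψ H := by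
    rw [hform]
    simp only [Set.mem_setOf_eq, mul_inv_cancel]
    exact D.hM1 H hB
  obtain ⟨i0, hi0⟩ := D.hsurj γ
  have hne : ∃ i, D.e i ∈ D.ψ H := ⟨i0, hi0 ▸ hγψ⟩
  refine ⟨Nat.find hne, Nat.find_spec hne, fun j hj => Nat.find_min hne hj⟩

lemma Pn_unique {H : Subgroup G} {n n' : ℕ} (h1 : D.Pn n H) (h2 : D.Pn n' H) : n = n' := by
  rcases lt_trichotomy n n' with h | h | h
  · exact absurd h1.1 (h2.2 n h)
  · exact h
  · exact absurd h2.1 (h1.2 n' h)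

lemma Pn_MR {H : Subgroup G} (hB : H ∈ D.B) {n : ℕ} (hn : D.Pn n H) : D.MR n H := by
  refine ⟨D.hψZ H hB hn.1, fun j hj hmem => ?_⟩
  exact hn.2 j hj ((psi_self D hB hn.1 (D.e j)).2 hmem)

lemma exists_Pat (H : Subgroup G) (n : ℕ) : ∃ s, D.Pat n s H := by
  refine ⟨(Finset.range n).filter (fun i => D.MR i H), Finset.filter_subset _ _, ?_, ?_⟩
  · intro i hi
    exact (Finset.mem_filter.1 hi).2
  · intro i hilt hinot hmr
    exact hinot (Finset.mem_filter.2 ⟨Finset.mem_range.2 hilt, hmr⟩)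

lemma Pat_unique {H : Subgroup G} {n : ℕ} {s s' : Finset ℕ}
    (h1 : D.Pat n s H) (h2 : D.Pat n s' H) : s = s' := by
  ext i
  constructor
  · intro hi
    by_contra hnot
    exact h2.2.2 i (Finset.mem_range.1 (h1.1 hi)) hnot (h1.2.1 i hi)
  · intro hi
    by_contra hnot
    exact h1.2.2 i (Finset.mem_range.1 (h2.1 hi)) hnot (h2.2.1 i hi)

lemma exists_Nx {H : Subgroup G} (hB : H ∈ D.B) (n : ℕ) : ∃ m, D.Nx n m H := by
  obtain ⟨γ, hγZ, hγnew⟩ := D.hinf H hB ((Finset.range (n+1)).image D.e)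
  have hT : ∃ j, D.e j ∈ D.Z H ∧ D.e j * γ⁻¹ ∈ D.M H := by
    obtain ⟨i0, hi0⟩ := D.hsurj γ
    exact ⟨i0, by rw [hi0]; exact hγZ, by rw [hi0]; simpa using D.hM1 H hB⟩
  set i1 := Nat.find hT with hi1def
  have hi1 := Nat.find_spec hT
  have hMRi1 : D.MR i1 H := by
    refine ⟨hi1.1, fun j hj hmem => ?_⟩
    have hjZ : D.e j ∈ D.Z H := by
      have : D.e j = (D.e j * (D.e i1)⁻¹) * D.e i1 := by group
      rw [this]
      exact D.hZmul H hB _ (D.hMZ H hB hmem) _ hi1.1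
    have hjM : D.e j * γ⁻¹ ∈ D.M H := by
      have : D.e j * γ⁻¹ = (D.e j * (D.e i1)⁻¹) * (D.e i1 * γ⁻¹) := by group
      rw [this]
      exact D.hMmul H hB _ hmem _ hi1.2
    exact Nat.find_min hT hj ⟨hjZ, hjM⟩
  have hi1n : n < i1 := by
    by_contra hle
    push_neg at hle
    have hmemF : D.e i1 ∈ (Finset.range (n+1)).image D.e :=
      Finset.mem_image.2 ⟨i1, Finset.mem_range.2 (Nat.lt_succ_of_le hle), rfl⟩
    have := hγnew _ hmemF
    apply this
    have : γ * (D.e i1)⁻¹ = (D.e i1 * γ⁻¹)⁻¹ := by group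
    rw [this]
    exact D.hMinv H hB _ hi1.2
  have hT2 : ∃ m, n < m ∧ D.MR m H := ⟨i1, hi1n, hMRi1⟩
  refine ⟨Nat.find hT2, (Nat.find_spec hT2).1, (Nat.find_spec hT2).2, ?_⟩
  intro j hj1 hj2 hmr
  exact Nat.find_min hT2 hj2 ⟨hj1, hmr⟩

lemma Nx_unique {H : Subgroup G} {n m m' : ℕ} (h1 : D.Nx n m H) (h2 : D.Nx n m' H) :
    m = m' := by
  rcases lt_trichotomy m m' with h | h | h
  · exact absurd h1.2.1 (h2.2.2 m h1.1 h)
  · exact h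
  · exact absurd h2.2.1 (h1.2.2 m' h2.1 h)

/-! successor construction -/

lemma MR_transfer {H : Subgroup G} (hB : H ∈ D.B) {δ : G} (hδ : δ ∈ D.Z H) (i : ℕ) :
    D.MR i (conjSubgroup δ H) ↔ D.MR i H := by
  obtain ⟨-, hZ', hM', -⟩ := D.hstep H hB δ hδ
  unfold MR
  rw [hZ', hM']

lemma succ_spec {H : Subgroup G} {n m : ℕ} {s : Finset ℕ} (hp : H ∈ D.piece n s m) :
    conjSubgroup ((D.e n)⁻¹ * D.e m) H ∈ D.B ∧
    D.Pn m (conjSubgroup ((D.e n)⁻¹ * D.e m) H) ∧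
    D.Pat m (insert n s) (conjSubgroup ((D.e n)⁻¹ * D.e m) H) := by
  obtain ⟨hB, hPn, hPat, hNx⟩ := hp
  set δ := (D.e n)⁻¹ * D.e m with hδdef
  have henψ : D.e n ∈ D.ψ H := hPn.1
  have henZ : D.e n ∈ D.Z H := D.hψZ H hB henψ
  have hemZ : D.e m ∈ D.Z H := hNx.2.1.1
  have hδZ : δ ∈ D.Z H := D.hZmul H hB _ (D.hZinv H hB _ henZ) _ hemZ
  obtain ⟨hB', hZ', hM', hψ'⟩ := D.hstep H hB δ hδZ
  have hψchar : ∀ x : G, x ∈ D.ψ (conjSubgroup δ H) ↔ x * (D.e m)⁻¹ ∈ D.M H := by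
    intro x
    rw [hψ']
    have h1 : (x * δ⁻¹) ∈ D.ψ H ↔ (x * δ⁻¹) * (D.e n)⁻¹ ∈ D.M H := psi_self D hB henψ _
    have h2 : (x * δ⁻¹) * (D.e n)⁻¹ = x * (D.e m)⁻¹ := by rw [hδdef]; group
    rw [Set.mem_setOf_eq, h1, h2]
  have hPn' : D.Pn m (conjSubgroup δ H) := by
    constructor
    · rw [hψchar]
      simpa using D.hM1 H hB
    · intro j hj hmem
      rw [hψchar] at hmem
      exact hNx.2.1.2 j hj hmem
  refine ⟨hB', hPn', ?_, ?_, ?_⟩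
  · -- insert n s ⊆ range m
    intro i hi
    rcases Finset.mem_insert.1 hi with rfl | hi
    · exact Finset.mem_range.2 hNx.1
    · exact Finset.mem_range.2 (lt_trans (Finset.mem_range.1 (hPat.1 hi)) hNx.1)
  · intro i hi
    rw [MR_transfer D hB hδZ]
    rcases Finset.mem_insert.1 hi with rfl | hi
    · exact Pn_MR D hB hPn
    · exact hPat.2.1 i hi
  · intro i hilt hinot
    rw [MR_transfer D hB hδZ]
    rcases lt_trichotomy i n with h | h | h
    · exact hPat.2.2 i h (fun hmem => hinot (Finset.mem_insert_of_mem hmem))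
    · exact absurd (h ▸ Finset.mem_insert_self n s) hinot
    · exact hNx.2.2 i h hilt

lemma piece_not_mem {H : Subgroup G} {n m : ℕ} {s : Finset ℕ} (hp : H ∈ D.piece n s m) :
    n ∉ s := by
  intro hmem
  exact absurd (Finset.mem_range.1 (hp.2.2.1.1 hmem)) (lt_irrefl n)

lemma recover_unique {n1 n2 m1 m2 : ℕ} {s1 s2 : Finset ℕ} {H1 H2 : Subgroup G}
    (hp : H1 ∈ D.piece n1 s1 m1) (hq : H2 ∈ D.piece n2 s2 m2)
    (heq : conjSubgroup ((D.e n1)⁻¹ * D.e m1) H1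
         = conjSubgroup ((D.e n2)⁻¹ * D.e m2) H2) :
    n1 = n2 ∧ s1 = s2 ∧ m1 = m2 ∧ H1 = H2 := by
  obtain ⟨hB1', hPn1', hPat1'⟩ := D.succ_spec hp
  obtain ⟨hB2', hPn2', hPat2'⟩ := D.succ_spec hq
  rw [heq] at hPn1' hPat1'
  have hm : m1 = m2 := Pn_unique D hPn1' hPn2'
  subst hm
  have hins : insert n1 s1 = insert n2 s2 := Pat_unique D hPat1' hPat2'
  have hn1s1 : n1 ∉ s1 := D.piece_not_mem hp
  have hn2s2 : n2 ∉ s2 := D.piece_not_mem hq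
  have hle12 : n1 ≤ n2 := by
    have : n1 ∈ insert n2 s2 := hins ▸ Finset.mem_insert_self n1 s1
    rcases Finset.mem_insert.1 this with h | h
    · exact le_of_eq h
    · exact le_of_lt (Finset.mem_range.1 (hq.2.2.1.1 h))
  have hle21 : n2 ≤ n1 := by
    have : n2 ∈ insert n1 s1 := hins.symm ▸ Finset.mem_insert_self n2 s2
    rcases Finset.mem_insert.1 this with h | h
    · exact le_of_eq h
    · exact le_of_lt (Finset.mem_range.1 (hp.2.2.1.1 h))
  have hn : n1 = n2 := le_antisymm hle12 hle21
  subst hn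
  have hs : s1 = s2 := by
    have e1 : s1 = (insert n1 s1).erase n1 := (Finset.erase_insert hn1s1).symm
    have e2 : s2 = (insert n1 s2).erase n1 := (Finset.erase_insert hn2s2).symm
    rw [e1, e2, hins]
  subst hs
  refine ⟨rfl, rfl, rfl, ?_⟩
  have := congrArg (conjSubgroup ((D.e n1)⁻¹ * D.e m1)⁻¹) heq
  rwa [conjSubgroup_inv_conjSubgroup, conjSubgroup_inv_conjSubgroup] at this

end RankData

lemma measurable_conjSubgroup {G : Type*} [Group G] (g : G) :
    Measurable (fun H : Subgroup G => conjSubgroup g H) := by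
  apply measurable_generateFrom
  rintro t ⟨a, rfl⟩
  have : (fun H : Subgroup G => conjSubgroup g H) ⁻¹' {H | a ∈ H}
      = {H : Subgroup G | g * a * g⁻¹ ∈ H} := by
    ext H
    simp only [Set.mem_preimage, Set.mem_setOf_eq, mem_conjSubgroup]
  rw [this]
  exact MeasurableSpace.measurableSet_generateFrom ⟨g * a * g⁻¹, rfl⟩

namespace RankData

def fam (k : ℕ) (p : ℕ × Finset ℕ × ℕ) : Set (Subgroup G) :=
  if p.2.1.card = k then D.piece p.1 p.2.1 p.2.2 else ∅

def im (k : ℕ) (p : ℕ × Finset ℕ × ℕ) : Set (Subgroup G) :=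
  (fun H => conjSubgroup ((D.e p.1)⁻¹ * D.e p.2.2)⁻¹ H) ⁻¹' D.fam k p

lemma fam_meas (k : ℕ) (p : ℕ × Finset ℕ × ℕ) : MeasurableSet (D.fam k p) := by
  unfold fam
  split
  · exact D.piece_meas _ _ _
  · exact MeasurableSet.empty

lemma im_meas (k : ℕ) (p : ℕ × Finset ℕ × ℕ) : MeasurableSet (D.im k p) :=
  (measurable_conjSubgroup _) (D.fam_meas k p)

lemma Bk_cover (k : ℕ) : D.Bk k ⊆ ⋃ p : ℕ × Finset ℕ × ℕ, D.fam k p := by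
  rintro H ⟨hB, n, s, hcard, hPn, hPat⟩
  obtain ⟨m, hNx⟩ := D.exists_Nx hB n
  refine Set.mem_iUnion.2 ⟨(n, s, m), ?_⟩
  unfold fam
  simp only [hcard, if_true]
  exact ⟨hB, hPn, hPat, hNx⟩

lemma im_measure_eq (k : ℕ) (p : ℕ × Finset ℕ × ℕ) : D.μ (D.im k p) = D.μ (D.fam k p) :=
  D.hinv _ _ (D.fam_meas k p)

lemma im_subset (k : ℕ) (p : ℕ × Finset ℕ × ℕ) : D.im k p ⊆ D.Bk (k+1) := by
  intro H' hH'
  unfold im at hH'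
  rw [Set.mem_preimage] at hH'
  unfold fam at hH'
  split at hH'
  case isFalse => exact absurd hH' (Set.notMem_empty _)
  case isTrue hcard =>
  obtain ⟨n, s, m⟩ := p
  set δ := (D.e n)⁻¹ * D.e m with hδdef
  have hrec : conjSubgroup δ (conjSubgroup δ⁻¹ H') = H' := conjSubgroup_conjSubgroup_inv _ _
  set H := conjSubgroup δ⁻¹ H' with hHdef
  obtain ⟨hB', hPn', hPat'⟩ := D.succ_spec hH'
  rw [hrec] at hB' hPn' hPat'
  have hnotmem : n ∉ s := D.piece_not_mem hH'
  refine ⟨hB', m, insert n s, ?_, hPn', hPat'⟩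
  rw [Finset.card_insert_of_notMem hnotmem, hcard]

lemma im_disjoint (k : ℕ) : Pairwise (Function.onFun Disjoint (D.im k)) := by
  intro p q hpq
  rw [Function.onFun]
  rw [Set.disjoint_left]
  intro H' hp hq
  unfold im fam at hp hq
  rw [Set.mem_preimage] at hp hq
  split at hp
  case isFalse => exact absurd hp (Set.notMem_empty _)
  case isTrue hcp =>
  split at hq
  case isFalse => exact absurd hq (Set.notMem_empty _)
  case isTrue hcq =>
  have e1 : conjSubgroup ((D.e p.1)⁻¹ * D.e p.2.2) (conjSubgroup ((D.e p.1)⁻¹ * D.e p.2.2)⁻¹ H')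
      = H' := conjSubgroup_conjSubgroup_inv _ _
  have e2 : conjSubgroup ((D.e q.1)⁻¹ * D.e q.2.2) (conjSubgroup ((D.e q.1)⁻¹ * D.e q.2.2)⁻¹ H')
      = H' := conjSubgroup_conjSubgroup_inv _ _
  have := D.recover_unique hp hq (e1.trans e2.symm)
  apply hpq
  obtain ⟨h1, h2, h3, -⟩ := this
  exact Prod.ext h1 (Prod.ext h2 h3)

lemma Bk_mono (k : ℕ) : D.μ (D.Bk k) ≤ D.μ (D.Bk (k+1)) := by
  calc D.μ (D.Bk k) ≤ D.μ (⋃ p : ℕ × Finset ℕ × ℕ, D.fam k p) := measure_mono (D.Bk_cover k)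
    _ ≤ ∑' p : ℕ × Finset ℕ × ℕ, D.μ (D.fam k p) := measure_iUnion_le _
    _ = ∑' p : ℕ × Finset ℕ × ℕ, D.μ (D.im k p) := by
        exact tsum_congr (fun p => (D.im_measure_eq k p).symm)
    _ = D.μ (⋃ p : ℕ × Finset ℕ × ℕ, D.im k p) :=
        (measure_iUnion (D.im_disjoint k) (D.im_meas k)).symm
    _ ≤ D.μ (D.Bk (k+1)) := measure_mono (Set.iUnion_subset (D.im_subset k))

lemma Bk_disjoint : Pairwise (Function.onFun Disjoint D.Bk) := by
  intro k k' hkk'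
  rw [Function.onFun, Set.disjoint_left]
  rintro H ⟨hB, n, s, hcard, hPn, hPat⟩ ⟨-, n', s', hcard', hPn', hPat'⟩
  apply hkk'
  have hn : n = n' := Pn_unique D hPn hPn'
  subst hn
  have hs : s = s' := Pat_unique D hPat hPat'
  subst hs
  rw [← hcard, ← hcard']

lemma B_cover : D.B ⊆ ⋃ k, D.Bk k := by
  intro H hB
  obtain ⟨n, hPn⟩ := D.exists_Pn hB
  obtain ⟨s, hPat⟩ := D.exists_Pat H n
  exact Set.mem_iUnion.2 ⟨s.card, hB, n, s, rfl, hPn, hPat⟩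

theorem vanish [IsFiniteMeasure D.μ] : D.μ D.B = 0 := by
  have hz : ∀ k, D.μ (D.Bk k) = 0 := by
    intro k
    by_contra hc
    have hmono : ∀ j, D.μ (D.Bk k) ≤ D.μ (D.Bk (k + j)) := by
      intro j
      induction j with
      | zero => simp
      | succ j ih =>
          have : k + (j+1) = (k + j) + 1 := by omega
          rw [this]
          exact le_trans ih (D.Bk_mono (k + j))
    have htop : (⊤ : ENNReal) ≤ ∑' j : ℕ, D.μ (D.Bk (k + j)) := by
      calc (⊤ : ENNReal) = ∑' _ : ℕ, D.μ (D.Bk k) :=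
            (ENNReal.tsum_const_eq_top_of_ne_zero hc).symm
        _ ≤ ∑' j : ℕ, D.μ (D.Bk (k + j)) :=
            ENNReal.tsum_le_tsum (fun j => hmono j)
    have hfin : ∑' j : ℕ, D.μ (D.Bk (k + j)) ≤ D.μ Set.univ := by
      have hdisj : Pairwise (Function.onFun Disjoint (fun j : ℕ => D.Bk (k + j))) := by
        intro a b hab
        exact D.Bk_disjoint (by omega)
      rw [← measure_iUnion hdisj (fun j => D.Bk_meas (k + j))]
      exact measure_mono (Set.subset_univ _)
    have : (⊤ : ENNReal) ≤ D.μ Set.univ := le_trans htop hfin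
    exact absurd (lt_of_le_of_lt this (measure_lt_top D.μ _)) (lt_irrefl _)
  have : D.μ D.B ≤ D.μ (⋃ k, D.Bk k) := measure_mono D.B_cover
  rw [measure_iUnion_null (fun k => hz k)] at this
  exact le_antisymm this zero_le

end RankData
end Rank

section Meas

variable {G X : Type*} [Group G] [Countable G] [MulAction Gᵐᵒᵖ X]

lemma meas_basic (a : G) : MeasurableSet {H : Subgroup G | a ∈ H} :=
  MeasurableSpace.measurableSet_generateFrom ⟨a, rfl⟩

lemma meas_const {P : Prop} : MeasurableSet {H : Subgroup G | P} := by
  by_cases hP : P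
  · have : {H : Subgroup G | P} = Set.univ := by ext H; simp [hP]
    rw [this]; exact MeasurableSet.univ
  · have : {H : Subgroup G | P} = ∅ := by ext H; simp [hP]
    rw [this]; exact MeasurableSet.empty

lemma meas_iff {p q : Subgroup G → Prop} (hp : MeasurableSet {H : Subgroup G | p H})
    (hq : MeasurableSet {H : Subgroup G | q H}) :
    MeasurableSet {H : Subgroup G | p H ↔ q H} := by
  have : {H : Subgroup G | p H ↔ q H}
      = ({H | p H} ∩ {H | q H}) ∪ (({H | p H})ᶜ ∩ ({H | q H})ᶜ) := by
    ext H
    simp only [Set.mem_setOf_eq, Set.mem_union, Set.mem_inter_iff, Set.mem_compl_iff]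
    tauto
  rw [this]
  exact (hp.inter hq).union (hp.compl.inter hq.compl)

lemma meas_and {p q : Subgroup G → Prop} (hp : MeasurableSet {H : Subgroup G | p H})
    (hq : MeasurableSet {H : Subgroup G | q H}) :
    MeasurableSet {H : Subgroup G | p H ∧ q H} := by
  have : {H : Subgroup G | p H ∧ q H} = {H | p H} ∩ {H | q H} := rfl
  rw [this]
  exact hp.inter hq

lemma meas_conjcond (a : G) (U : Set X) :
    MeasurableSet {H : Subgroup G |
      conjSubgroup a (H ⊓ rigidStabilizer G U) = H ⊓ rigidStabilizer G U} := by
  have key : ∀ H : Subgroup G,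
      (conjSubgroup a (H ⊓ rigidStabilizer G U) = H ⊓ rigidStabilizer G U) ↔
      (∀ b : G, ((a * b * a⁻¹ ∈ H ∧ a * b * a⁻¹ ∈ rigidStabilizer G U) ↔
        (b ∈ H ∧ b ∈ rigidStabilizer G U))) := by
    intro H
    rw [SetLike.ext_iff]
    constructor
    · intro h b
      have := h b
      rw [mem_conjSubgroup, Subgroup.mem_inf, Subgroup.mem_inf] at this
      exact this
    · intro h b
      rw [mem_conjSubgroup, Subgroup.mem_inf, Subgroup.mem_inf]
      exact h b
  have : {H : Subgroup G |
      conjSubgroup a (H ⊓ rigidStabilizer G U) = H ⊓ rigidStabilizer G U}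
      = ⋂ b : G, {H : Subgroup G | (a * b * a⁻¹ ∈ H ∧ a * b * a⁻¹ ∈ rigidStabilizer G U) ↔
        (b ∈ H ∧ b ∈ rigidStabilizer G U)} := by
    ext H
    simp only [Set.mem_setOf_eq, Set.mem_iInter]
    exact key H
  rw [this]
  exact MeasurableSet.iInter (fun b =>
    meas_iff (meas_and (meas_basic _) meas_const) (meas_and (meas_basic _) meas_const))

lemma meas_Ksub (hfaith : ∀ g : G, (∀ x : X, op g • x = x) → g = 1) (U : Set X) (a : G) :
    MeasurableSet {H : Subgroup G | a ∈ Ksub hfaith U H} := by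
  have : {H : Subgroup G | a ∈ Ksub hfaith U H}
      = {H : Subgroup G | a ∈ rigidStabilizer G U} ∩
        {H | conjSubgroup a (H ⊓ rigidStabilizer G U) = H ⊓ rigidStabilizer G U} ∩
        ⋃ w : G, ⋃ (_ : (fun x : X => op w • x) '' U = U ∧ ∀ x ∈ U, op w • x = op a • x),
          {H : Subgroup G | w ∈ H} := by
    ext H
    simp only [Set.mem_inter_iff, Set.mem_setOf_eq, Set.mem_iUnion]
    constructor
    · rintro ⟨h1, h2, w, hw, hwU, hag⟩
      exact ⟨⟨h1, h2⟩, w, ⟨hwU, hag⟩, hw⟩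
    · rintro ⟨⟨h1, h2⟩, w, ⟨hwU, hag⟩, hw⟩
      exact ⟨h1, h2, w, hw, hwU, hag⟩
  rw [this]
  exact ((meas_const.inter (meas_conjcond a U)).inter
    (MeasurableSet.iUnion (fun w => MeasurableSet.iUnion (fun _ => meas_basic w))))

lemma meas_ret (U : Set X) (h γ : G) :
    MeasurableSet {H : Subgroup G | γ ∈ retSet U h H} := by
  have : {H : Subgroup G | γ ∈ retSet U h H}
      = {H : Subgroup G | γ ∈ rigidStabilizer G U} ∩ {H | γ * h * γ⁻¹ ∈ H} := rfl
  rw [this]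
  exact meas_const.inter (meas_basic _)

lemma meas_M1 (hfaith : ∀ g : G, (∀ x : X, op g • x = x) → g = 1) (U : Set X) (h x : G) :
    MeasurableSet {H : Subgroup G | x ∈ M1 hfaith U h H} := by
  have : {H : Subgroup G | x ∈ M1 hfaith U h H}
      = ⋃ γ1 : G, ({H : Subgroup G | γ1 ∈ retSet U h H} ∩
          {H | γ1 * x * γ1⁻¹ ∈ Ksub hfaith U H}) := by
    ext H
    simp only [Set.mem_setOf_eq, Set.mem_iUnion, Set.mem_inter_iff]
    exact ⟨fun ⟨γ1, h1, h2⟩ => ⟨γ1, h1, h2⟩, fun ⟨γ1, h1, h2⟩ => ⟨γ1, h1, h2⟩⟩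
  rw [this]
  exact MeasurableSet.iUnion (fun γ1 => (meas_ret U h γ1).inter (meas_Ksub hfaith U _))

lemma meas_psi1 (hfaith : ∀ g : G, (∀ x : X, op g • x = x) → g = 1) (U : Set X) (h x : G) :
    MeasurableSet {H : Subgroup G | x ∈ psi1 hfaith U h H} := by
  have : {H : Subgroup G | x ∈ psi1 hfaith U h H}
      = ⋃ γ1 : G, ({H : Subgroup G | γ1 ∈ retSet U h H} ∩
          {H | γ1 * x ∈ Ksub hfaith U H}) := by
    ext H
    simp only [Set.mem_setOf_eq, Set.mem_iUnion, Set.mem_inter_iff]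
    exact ⟨fun ⟨γ1, h1, h2⟩ => ⟨γ1, h1, h2⟩, fun ⟨γ1, h1, h2⟩ => ⟨γ1, h1, h2⟩⟩
  rw [this]
  exact MeasurableSet.iUnion (fun γ1 => (meas_ret U h γ1).inter (meas_Ksub hfaith U _))

lemma meas_nrm (U : Set X) (γ : G) :
    MeasurableSet {H : Subgroup G | γ ∈ nrmSet U H} := by
  have : {H : Subgroup G | γ ∈ nrmSet U H}
      = {H : Subgroup G | γ ∈ rigidStabilizer G U} ∩
        {H | conjSubgroup γ (H ⊓ rigidStabilizer G U) = H ⊓ rigidStabilizer G U} := rfl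
  rw [this]
  exact meas_const.inter (meas_conjcond γ U)

lemma meas_S0 (U : Set X) (w₀ γ : G) :
    MeasurableSet {H : Subgroup G | γ ∈ S0 U w₀ H} := by
  have : {H : Subgroup G | γ ∈ S0 U w₀ H}
      = {H : Subgroup G | γ ∈ nrmSet U H} ∩ {H | γ * w₀ * γ⁻¹ ∈ H} := rfl
  rw [this]
  exact (meas_nrm U γ).inter (meas_basic _)

lemma meas_M2 (U : Set X) (w₀ k : G) :
    MeasurableSet {H : Subgroup G | k ∈ M2 U w₀ H} := by
  have : {H : Subgroup G | k ∈ M2 U w₀ H}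
      = {H : Subgroup G | k ∈ nrmSet U H} ∩ {H | w₀⁻¹ * k⁻¹ * w₀ * k ∈ H} := rfl
  rw [this]
  exact (meas_nrm U k).inter (meas_basic _)

lemma meas_psi2 (U : Set X) (w₀ x : G) :
    MeasurableSet {H : Subgroup G | x ∈ psi2 U w₀ H} := meas_S0 U w₀ x⁻¹

end Meas

section Inst

variable {G X : Type*} [Group G] [Countable G] [MulAction Gᵐᵒᵖ X]

def B1set (hfaith : ∀ g : G, (∀ x : X, op g • x = x) → g = 1) (U : Set X) (h : G) :
    Set (Subgroup G) :=
  {H : Subgroup G | (∃ γ, γ ∈ retSet U h H) ∧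
    ∀ F : Finset G, ∃ γ, γ ∈ rigidStabilizer G U ∧ ∀ f ∈ F, γ * f⁻¹ ∉ M1 hfaith U h H}

def B2set (U : Set X) (w₀ : G) : Set (Subgroup G) :=
  {H : Subgroup G | (∃ γ, γ ∈ S0 U w₀ H) ∧
    ∀ F : Finset G, ∃ γ, γ ∈ nrmSet U H ∧ ∀ f ∈ F, γ * f⁻¹ ∉ M2 U w₀ H}

lemma meas_B1 (hfaith : ∀ g : G, (∀ x : X, op g • x = x) → g = 1) (U : Set X) (h : G) :
    MeasurableSet (B1set hfaith U h) := by
  have : B1set hfaith U h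
      = (⋃ γ : G, {H : Subgroup G | γ ∈ retSet U h H}) ∩
        ⋂ F : Finset G, ⋃ γ : G, ({H : Subgroup G | γ ∈ rigidStabilizer G U} ∩
          ⋂ f ∈ F, {H : Subgroup G | γ * f⁻¹ ∈ M1 hfaith U h H}ᶜ) := by
    ext H
    simp only [B1set, Set.mem_setOf_eq, Set.mem_inter_iff, Set.mem_iUnion, Set.mem_iInter,
      Set.mem_compl_iff]
  rw [this]
  refine (MeasurableSet.iUnion (fun γ => meas_ret U h γ)).inter
    (MeasurableSet.iInter (fun F => MeasurableSet.iUnion (fun γ => ?_)))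
  exact meas_const.inter
    (MeasurableSet.biInter F.countable_toSet (fun f _ => (meas_M1 hfaith U h _).compl))

lemma meas_B2 (U : Set X) (w₀ : G) : MeasurableSet (B2set U w₀) := by
  have : B2set U w₀
      = (⋃ γ : G, {H : Subgroup G | γ ∈ S0 U w₀ H}) ∩
        ⋂ F : Finset G, ⋃ γ : G, ({H : Subgroup G | γ ∈ nrmSet U H} ∩
          ⋂ f ∈ F, {H : Subgroup G | γ * f⁻¹ ∈ M2 U w₀ H}ᶜ) := by
    ext H
    simp only [B2set, Set.mem_setOf_eq, Set.mem_inter_iff, Set.mem_iUnion, Set.mem_iInter,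
      Set.mem_compl_iff]
  rw [this]
  refine (MeasurableSet.iUnion (fun γ => meas_S0 U w₀ γ)).inter
    (MeasurableSet.iInter (fun F => MeasurableSet.iUnion (fun γ => ?_)))
  exact (meas_nrm U γ).inter
    (MeasurableSet.biInter F.countable_toSet (fun f _ => (meas_M2 U w₀ _).compl))

lemma M1_sub_R (hfaith : ∀ g : G, (∀ x : X, op g • x = x) → g = 1) (U : Set X) (h : G)
    (H : Subgroup G) : M1 hfaith U h H ⊆ (rigidStabilizer G U : Set G) := by
  rintro x ⟨γ1, hγ1, hx⟩
  have hxR : γ1 * x * γ1⁻¹ ∈ rigidStabilizer G U := Ksub_le hfaith U H hx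
  have : x = γ1⁻¹ * (γ1 * x * γ1⁻¹) * γ1 := by group
  rw [this]
  exact mul_mem (mul_mem (inv_mem hγ1.1) hxR) hγ1.1

lemma psi1_sub_R (hfaith : ∀ g : G, (∀ x : X, op g • x = x) → g = 1) (U : Set X) (h : G)
    (H : Subgroup G) : psi1 hfaith U h H ⊆ (rigidStabilizer G U : Set G) := by
  rintro x ⟨γ1, hγ1, hx⟩
  have hxR : γ1 * x ∈ rigidStabilizer G U := Ksub_le hfaith U H hx
  have : x = γ1⁻¹ * (γ1 * x) := by group
  rw [this]
  exact mul_mem (inv_mem hγ1.1) hxR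

lemma B1_null (μ : Measure (Subgroup G)) [IsProbabilityMeasure μ]
    (hinv : ∀ g : G, ∀ S : Set (Subgroup G), MeasurableSet S →
      μ ((fun H : Subgroup G => conjSubgroup g H) ⁻¹' S) = μ S)
    (hfaith : ∀ g : G, (∀ x : X, op g • x = x) → g = 1)
    {U V : Set X} {h : G} (hUV : (fun x : X => op h • x) '' U = V) (hdisj : U ∩ V = ∅) :
    μ (B1set hfaith U h) = 0 := by
  obtain ⟨e, he⟩ := exists_surjective_nat G
  let D : RankData G := {
    μ := μ
    Z := fun _ => (rigidStabilizer G U : Set G)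
    M := M1 hfaith U h
    ψ := psi1 hfaith U h
    B := B1set hfaith U h
    e := e
    hsurj := he
    hinv := hinv
    hBmeas := meas_B1 hfaith U h
    hZmeas := fun g => meas_const
    hMmeas := fun g => meas_M1 hfaith U h g
    hψmeas := fun g => meas_psi1 hfaith U h g
    hMZ := fun H _ => M1_sub_R hfaith U h H
    hZmul := fun H _ a ha b hb => mul_mem ha hb
    hZinv := fun H _ a ha => inv_mem ha
    hM1 := by
      rintro H ⟨⟨γ1, hγ1⟩, -⟩
      refine ⟨γ1, hγ1, ?_⟩
      have : γ1 * (1:G) * γ1⁻¹ = 1 := by group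
      rw [this]
      exact one_mem _
    hMmul := by
      rintro H ⟨⟨γ1, hγ1⟩, -⟩ a ha b hb
      rw [M1_eq hfaith hUV hdisj hγ1] at ha hb ⊢
      have : γ1 * (a * b) * γ1⁻¹ = (γ1 * a * γ1⁻¹) * (γ1 * b * γ1⁻¹) := by group
      show γ1 * (a * b) * γ1⁻¹ ∈ Ksub hfaith U H
      rw [this]
      exact mul_mem ha hb
    hMinv := by
      rintro H ⟨⟨γ1, hγ1⟩, -⟩ a ha
      rw [M1_eq hfaith hUV hdisj hγ1] at ha ⊢
      have : γ1 * a⁻¹ * γ1⁻¹ = (γ1 * a * γ1⁻¹)⁻¹ := by group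
      show γ1 * a⁻¹ * γ1⁻¹ ∈ Ksub hfaith U H
      rw [this]
      exact inv_mem ha
    hψZ := fun H _ => psi1_sub_R hfaith U h H
    hψco := by
      rintro H ⟨⟨γ1, hγ1⟩, -⟩
      refine ⟨γ1⁻¹, inv_mem hγ1.1, ?_⟩
      ext x
      rw [psi1_eq hfaith hUV hdisj hγ1]
      simp only [Set.mem_setOf_eq, inv_inv]
      rw [M1_eq hfaith hUV hdisj hγ1]
      simp only [Set.mem_setOf_eq]
      have : γ1 * (x * γ1) * γ1⁻¹ = γ1 * x := by group
      rw [this]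
    hstep := by
      rintro H hB δ hδ
      obtain ⟨⟨γ, hγ⟩, hII⟩ := hB
      refine ⟨⟨⟨δ⁻¹ * γ, ?_⟩, ?_⟩, rfl, M1_conj hfaith hδ, psi1_conj hfaith hδ⟩
      · rw [retSet_conj hδ]
        simpa using hγ
      · intro F
        rw [M1_conj hfaith hδ]
        exact hII F
    hinf := by
      rintro H hB F
      obtain ⟨γ, hγR, hγ⟩ := hB.2 F
      exact ⟨γ, hγR, hγ⟩ }
  have : IsFiniteMeasure D.μ := by
    show IsFiniteMeasure μ
    infer_instance
  exact D.vanish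

lemma B2_null (μ : Measure (Subgroup G)) [IsProbabilityMeasure μ]
    (hinv : ∀ g : G, ∀ S : Set (Subgroup G), MeasurableSet S →
      μ ((fun H : Subgroup G => conjSubgroup g H) ⁻¹' S) = μ S)
    {U : Set X} {w₀ : G} (hw₀U : (fun x : X => op w₀ • x) '' U = U) :
    μ (B2set U w₀) = 0 := by
  obtain ⟨e, he⟩ := exists_surjective_nat G
  let D : RankData G := {
    μ := μ
    Z := nrmSet U
    M := M2 U w₀
    ψ := psi2 U w₀
    B := B2set U w₀
    e := e
    hsurj := he
    hinv := hinv
    hBmeas := meas_B2 U w₀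
    hZmeas := fun g => meas_nrm U g
    hMmeas := fun g => meas_M2 U w₀ g
    hψmeas := fun g => meas_psi2 U w₀ g
    hMZ := fun H _ k hk => hk.1
    hZmul := fun H _ a ha b hb => nrm_mul ha hb
    hZinv := fun H _ a ha => nrm_inv ha
    hM1 := fun H _ => M2_one
    hMmul := fun H _ a ha b hb => M2_mul hw₀U ha hb
    hMinv := fun H _ a ha => M2_inv hw₀U ha
    hψZ := by
      rintro H _ x hx
      have : (x⁻¹ : G) ∈ nrmSet U H := hx.1
      have := nrm_inv this
      simpa using this
    hψco := by
      rintro H ⟨⟨γ1, hγ1⟩, -⟩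
      exact ⟨γ1⁻¹, nrm_inv hγ1.1, psi2_coset hw₀U hγ1⟩
    hstep := by
      rintro H hB δ hδ
      obtain ⟨⟨γ, hγ⟩, hII⟩ := hB
      refine ⟨⟨⟨δ⁻¹ * γ, ?_⟩, ?_⟩, nrm_conj hδ, M2_conj hw₀U hδ, psi2_conj hδ⟩
      · rw [S0_conj hδ]
        simpa using hγ
      · intro F
        rw [nrm_conj hδ, M2_conj hw₀U hδ]
        exact hII F
    hinf := by
      rintro H hB F
      obtain ⟨γ, hγR, hγ⟩ := hB.2 F
      exact ⟨γ, hγR, hγ⟩ }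
  have : IsFiniteMeasure D.μ := by
    show IsFiniteMeasure μ
    infer_instance
  exact D.vanish

end Inst

section Bridges

variable {G X : Type*} [Group G] [Countable G] [MulAction Gᵐᵒᵖ X]

lemma M1_eq_K (hfaith : ∀ g : G, (∀ x : X, op g • x = x) → g = 1)
    {U V : Set X} {h : G} (hUV : (fun x : X => op h • x) '' U = V) (hdisj : U ∩ V = ∅)
    {H : Subgroup G} (hh : h ∈ H) :
    M1 hfaith U h H = (Ksub hfaith U H : Set G) := by
  have hret : (1:G) ∈ retSet U h H := ⟨one_mem _, by simpa using hh⟩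
  rw [M1_eq hfaith hUV hdisj hret]
  ext x
  simp only [Set.mem_setOf_eq, one_mul, inv_one, mul_one, SetLike.mem_coe]

lemma bridge1 (hfaith : ∀ g : G, (∀ x : X, op g • x = x) → g = 1)
    {U V : Set X} {h : G} (hUV : (fun x : X => op h • x) '' U = V) (hdisj : U ∩ V = ∅)
    {H : Subgroup G} (hh : h ∈ H) (hnB : H ∉ B1set hfaith U h) :
    (Ksub hfaith U H).relIndex (rigidStabilizer G U) ≠ 0 := by
  classical
  have hret : (1:G) ∈ retSet U h H := ⟨one_mem _, by simpa using hh⟩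
  have hcov : ∃ F : Finset G, ∀ γ, γ ∈ rigidStabilizer G U →
      ∃ f ∈ F, γ * f⁻¹ ∈ M1 hfaith U h H := by
    by_contra hc
    push_neg at hc
    apply hnB
    refine ⟨⟨1, hret⟩, fun F => ?_⟩
    obtain ⟨γ, hγR, hγ⟩ := hc F
    exact ⟨γ, hγR, fun f hf => hγ f hf⟩
  obtain ⟨F, hF⟩ := hcov
  rw [M1_eq_K hfaith hUV hdisj hh] at hF
  set R := rigidStabilizer G U with hRdef
  set K' := (Ksub hfaith U H).subgroupOf R with hK'def
  have hfin : Finite (↥R ⧸ K') := by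
    set σ : {f // f ∈ F} → ↥R ⧸ K' := fun f =>
      if hc : ∃ lam : ↥R, f.1 * lam.1 ∈ Ksub hfaith U H
        then QuotientGroup.mk (Classical.choose hc) else QuotientGroup.mk 1 with hσdef
    have hσ : Function.Surjective σ := by
      intro q
      obtain ⟨lam, rfl⟩ := QuotientGroup.mk_surjective q
      obtain ⟨f, hfF, hfM⟩ := hF lam.1⁻¹ (by exact inv_mem lam.2)
      have hflam : f * lam.1 ∈ Ksub hfaith U H := by
        have : f * lam.1 = (lam.1⁻¹ * f⁻¹)⁻¹ := by group
        rw [this]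
        exact inv_mem hfM
      have hc : ∃ lam' : ↥R, f * lam'.1 ∈ Ksub hfaith U H := ⟨lam, hflam⟩
      refine ⟨⟨f, hfF⟩, ?_⟩
      rw [hσdef]
      simp only
      rw [dif_pos hc]
      set lam0 := Classical.choose hc with hlam0
      have hspec : f * lam0.1 ∈ Ksub hfaith U H := Classical.choose_spec hc
      apply (QuotientGroup.eq).2
      rw [Subgroup.mem_subgroupOf]
      have : ((lam0⁻¹ * lam : ↥R) : G) = (f * lam0.1)⁻¹ * (f * lam.1) := by
        push_cast
        group
      rw [this]
      exact mul_mem (inv_mem hspec) hflam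
    exact Finite.of_surjective σ hσ
  have hne : Nonempty (↥R ⧸ K') := ⟨QuotientGroup.mk 1⟩
  exact Nat.card_ne_zero.2 ⟨hne, hfin⟩

lemma bridge2 (hfaith : ∀ g : G, (∀ x : X, op g • x = x) → g = 1)
    {U : Set X} {H : Subgroup G} {g w : G}
    (hg : g ∈ Ksub hfaith U H) (hw : w ∈ H)
    (hwU : (fun x : X => op w • x) '' U = U)
    (hag : ∀ x ∈ U, op w • x = op g • x)
    (hnB : H ∉ B2set U w) :
    {c : Set G | ∃ k ∈ Ksub hfaith U H,
      c = (fun y : G => (k⁻¹ * g * k) * y) ''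
        ((Ksub hfaith U H ⊓ H : Subgroup G) : Set G)}.Finite := by
  classical
  have hS0 : (1:G) ∈ S0 U w H := ⟨nrm_one, by simpa using hw⟩
  have hcov : ∃ F : Finset G, ∀ γ, γ ∈ nrmSet U H → ∃ f ∈ F, γ * f⁻¹ ∈ M2 U w H := by
    by_contra hc
    push_neg at hc
    apply hnB
    refine ⟨⟨1, hS0⟩, fun F => ?_⟩
    obtain ⟨γ, hγR, hγ⟩ := hc F
    exact ⟨γ, hγR, fun f hf => hγ f hf⟩
  obtain ⟨F, hF⟩ := hcov
  have hKnrm : ∀ k : G, k ∈ Ksub hfaith U H → k ∈ nrmSet U H := by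
    rintro k ⟨h1, h2, -⟩
    exact ⟨h1, h2⟩
  set ρ : {f // f ∈ F} → Set G := fun f =>
    if hc : ∃ k : G, k ∈ Ksub hfaith U H ∧ k * f.1⁻¹ ∈ M2 U w H
      then (fun y : G => ((Classical.choose hc)⁻¹ * g * Classical.choose hc) * y) ''
        ((Ksub hfaith U H ⊓ H : Subgroup G) : Set G)
      else ∅ with hρdef
  apply Set.Finite.subset (Set.finite_range ρ)
  rintro c ⟨k, hk, rfl⟩
  obtain ⟨f, hfF, hfM⟩ := hF k (hKnrm k hk)
  have hc : ∃ k' : G, k' ∈ Ksub hfaith U H ∧ k' * f⁻¹ ∈ M2 U w H := ⟨k, hk, hfM⟩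
  refine ⟨⟨f, hfF⟩, ?_⟩
  rw [hρdef]
  simp only
  rw [dif_pos hc]
  set k0 := Classical.choose hc with hk0
  obtain ⟨hk0K, hk0M⟩ := Classical.choose_spec hc
  -- s = k0 * k⁻¹ lies in M2 ∩ K
  have hsM : k0 * k⁻¹ ∈ M2 U w H := by
    have : k0 * k⁻¹ = (k0 * f⁻¹) * (k * f⁻¹)⁻¹ := by group
    rw [this]
    exact M2_mul hwU hk0M (M2_inv hwU hfM)
  have hsK : k0 * k⁻¹ ∈ Ksub hfaith U H := mul_mem hk0K (inv_mem hk)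
  set s := k0 * k⁻¹ with hsdef
  have hgs : g⁻¹ * s⁻¹ * g * s = w⁻¹ * s⁻¹ * w * s :=
    comm_transport hfaith (Ksub_le hfaith U H hg) (Ksub_le hfaith U H hsK) hwU hag
  have hgsH : g⁻¹ * s⁻¹ * g * s ∈ H := by
    rw [hgs]
    exact hsM.2
  have hgsK : g⁻¹ * s⁻¹ * g * s ∈ Ksub hfaith U H :=
    mul_mem (mul_mem (mul_mem (inv_mem hg) (inv_mem hsK)) hg) hsK
  have hr : k⁻¹ * (g⁻¹ * s⁻¹ * g * s) * k ∈ (Ksub hfaith U H ⊓ H : Subgroup G) := by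
    refine Subgroup.mem_inf.2 ⟨mul_mem (mul_mem (inv_mem hk) hgsK) hk, ?_⟩
    have hknrm : k ∈ nrmSet U H := hKnrm k hk
    have hmem : g⁻¹ * s⁻¹ * g * s ∈ H ⊓ rigidStabilizer G U :=
      Subgroup.mem_inf.2 ⟨hgsH, Ksub_le hfaith U H hgsK⟩
    exact (normpair_bwd hknrm hmem).1
  have hid : k0⁻¹ * g * k0 = (k⁻¹ * g * k) * (k⁻¹ * (g⁻¹ * s⁻¹ * g * s) * k) := by
    have hk0eq : k0 = s * k := by rw [hsdef]; group
    rw [hk0eq]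
    group
  rw [hid]
  exact (coset_absorb hr).symm ▸ rfl

end Bridges

/-- **Proposition 3.1(ii).** Let `G` be a countable group acting faithfully by
homeomorphisms on a second countable Hausdorff space `X` (encoded as a left action of
`Gᵐᵒᵖ`, so `x·g = op g • x`), let `𝒰` be a countable base of the topology and `μ` an
invariant random subgroup of `G`.  Then for `μ`-a.e. `H`: whenever `U, V ∈ 𝒰` are
disjoint and some `h ∈ H` maps `U` onto `V`, the set
`K = {g ∈ R_G(U) : g normalizes R_H(U) and g agrees on U with some h' ∈ H preserving U}`
is (the carrier of) a finite-index subgroup of `R_G(U)`, `K ∩ H` is normal in `K`, and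
the quotient `K/(K ∩ H)` is an FC-group (every `g ∈ K` has only finitely many cosets
`(k⁻¹gk)(K ∩ H)`, `k ∈ K`). -/
theorem irs_normalizer_fc_quotient
    {G X : Type*} [Group G] [Countable G] [TopologicalSpace X]
    [SecondCountableTopology X] [T2Space X] [MulAction Gᵐᵒᵖ X]
    (hcont : ∀ g : G, Continuous fun x : X => op g • x)
    (hfaith : ∀ g : G, (∀ x : X, op g • x = x) → g = 1)
    (𝒰 : Set (Set X)) (h𝒰 : TopologicalSpace.IsTopologicalBasis 𝒰)
    (h𝒰c : 𝒰.Countable)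
    (μ : Measure (Subgroup G)) [IsProbabilityMeasure μ]
    (hinv : ∀ g : G, ∀ B : Set (Subgroup G), MeasurableSet B →
      μ ((fun H : Subgroup G => conjSubgroup g H) ⁻¹' B) = μ B) :
    ∀ᵐ H ∂μ, ∀ U ∈ 𝒰, ∀ V ∈ 𝒰, U ∩ V = ∅ →
      (∃ h ∈ H, (fun x : X => op h • x) '' U = V) →
      ∃ K : Subgroup G,
        (K : Set G) = {g : G | g ∈ rigidStabilizer G U ∧
            conjSubgroup g (H ⊓ rigidStabilizer G U) = H ⊓ rigidStabilizer G U ∧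
            ∃ h' ∈ H, (fun x : X => op h' • x) '' U = U ∧
              ∀ x ∈ U, op h' • x = op g • x} ∧
        K ≤ rigidStabilizer G U ∧
        K.relIndex (rigidStabilizer G U) ≠ 0 ∧
        ((K ⊓ H).subgroupOf K).Normal ∧
        ∀ g ∈ K, {c : Set G | ∃ k ∈ K,
          c = (fun y : G => (k⁻¹ * g * k) * y) '' ((K ⊓ H : Subgroup G) : Set G)}.Finite := by
  classical
  set N : Set (Subgroup G) :=
    (⋃ U ∈ 𝒰, ⋃ V ∈ 𝒰, ⋃ h : G,
      ⋃ (_ : U ∩ V = ∅ ∧ (fun x : X => op h • x) '' U = V), B1set hfaith U h) ∪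
    (⋃ U ∈ 𝒰, ⋃ w : G, ⋃ (_ : (fun x : X => op w • x) '' U = U), B2set U w) with hNdef
  have hNnull : μ N = 0 := by
    rw [hNdef]
    apply measure_union_null
    · rw [measure_biUnion_null_iff h𝒰c]
      intro U hU
      rw [measure_biUnion_null_iff h𝒰c]
      intro V hV
      apply measure_iUnion_null
      intro h
      apply measure_iUnion_null
      intro hcond
      exact B1_null μ hinv hfaith hcond.2 hcond.1
    · rw [measure_biUnion_null_iff h𝒰c]
      intro U hU
      apply measure_iUnion_null
      intro w
      apply measure_iUnion_null
      intro hcond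
      exact B2_null μ hinv hcond
  rw [MeasureTheory.ae_iff]
  apply measure_mono_null _ hNnull
  intro H hH
  simp only [Set.mem_setOf_eq] at hH
  by_contra hHN
  apply hH
  intro U hU V hV hdisj hex
  obtain ⟨h, hh, hUV⟩ := hex
  refine ⟨Ksub hfaith U H, rfl, Ksub_le hfaith U H, ?_, Ksub_normal hfaith U H, ?_⟩
  · -- finite index
    apply bridge1 hfaith hUV hdisj hh
    intro hB1
    apply hHN
    rw [hNdef]
    left
    refine Set.mem_biUnion hU ?_
    refine Set.mem_biUnion hV ?_
    refine Set.mem_iUnion.2 ⟨h, ?_⟩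
    exact Set.mem_iUnion.2 ⟨⟨hdisj, hUV⟩, hB1⟩
  · -- FC
    intro g hg
    obtain ⟨hgR, w, hw, hwU, hag⟩ := (mem_Ksub_iff hfaith).1 hg
    apply bridge2 hfaith hg hw hwU hag
    intro hB2
    apply hHN
    rw [hNdef]
    right
    refine Set.mem_biUnion hU ?_
    refine Set.mem_iUnion.2 ⟨w, ?_⟩
    exact Set.mem_iUnion.2 ⟨hwU, hB2⟩
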